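/- arXiv:1211.2503 — 2 statements merged into one kernel-verified Lean document; each statement's English description precedes it below -/
import Mathlib

section
/- Let X1, X2, X3, Z1, Z2 be linearly independent elements of n_5(k) satisfying [X1,X2] = X3, [X1,X3] = Z1, [X2,X3] = Z2, and [Xi, Zj] = 0 for all i ∈ {1,2,3} and j ∈ {1,2}. If X4 ∈ n_5(k) satisfies [Xi, X4] = 0 for i = 1, 2, 3, then X4 lies in the k-linear span of {X1, X2, X3, Z1, Z2}. -/
attribute [local instance 100] LieRing.ofAssociativeRing

/-- The Lie algebra `n_n(k)` of strictly upper triangular `n × n` matrices over `k`. -/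
def strictUpper (k : Type*) [Field k] (n : ℕ) :
    LieSubalgebra k (Matrix (Fin n) (Fin n) k) where
  carrier := {A | ∀ i j : Fin n, j ≤ i → A i j = 0}
  add_mem' := by
    intro A B hA hB i j hij
    simp [Matrix.add_apply, hA i j hij, hB i j hij]
  zero_mem' := by intro i j hij; simp
  smul_mem' := by
    intro c A hA i j hij
    simp [Matrix.smul_apply, hA i j hij]
  lie_mem' := by
    intro A B hA hB i j hij
    have key : ∀ (X Y : Matrix (Fin n) (Fin n) k),
        (∀ i j : Fin n, j ≤ i → X i j = 0) → (∀ i j : Fin n, j ≤ i → Y i j = 0) →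
        (X * Y) i j = 0 := by
      intro X Y hX hY
      rw [Matrix.mul_apply]
      apply Finset.sum_eq_zero
      intro l _
      by_cases h : l ≤ i
      · rw [hX i l h, zero_mul]
      · push_neg at h
        rw [hY l j (hij.trans h.le), mul_zero]
    have hbr : ⁅A, B⁆ = A * B - B * A := Ring.lie_def A B
    rw [hbr, Matrix.sub_apply, key A B hA hB, key B A hB hA, sub_zero]

private theorem engineAux {K : Type*} [Field K]
    {a1 a2 a3 a4 d1 d2 d3 e1 e2 b1 b2 b3 b4 g1 g2 g3 n1 n2
     c1 c2 c3 r1 r2 p1 p2 q1 q2 z1 z2 y1 y2 y3 y4 w1 w2 w3 u1 u2 m1 m2 : K} (v : K)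
    (hc1e : c1 = a1*b2 - a2*b1) (hc2e : c2 = a2*b3 - a3*b2) (hc3e : c3 = a3*b4 - a4*b3)
    (hp1e : p1 = a1*c2 - a3*c1) (hp2e : p2 = a2*c3 - a4*c2)
    (hq1e : q1 = b1*c2 - b3*c1) (hq2e : q2 = b2*c3 - b4*c2)
    (hz1e : z1 = a1*r2 + d1*c3 - c1*d3 - r1*a4)
    (hz2e : z2 = b1*r2 + g1*c3 - c1*g3 - r1*b4)
    (ca : a1*p2 - a4*p1 = 0) (caq : a1*q2 - a4*q1 = 0)
    (cb : b1*p2 - b4*p1 = 0) (cbq : b1*q2 - b4*q1 = 0)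
    (E1 : a1*y2 - a2*y1 = 0) (E2 : a2*y3 - a3*y2 = 0) (E3 : a3*y4 - a4*y3 = 0)
    (E4 : b1*y2 - b2*y1 = 0) (E5 : b2*y3 - b3*y2 = 0) (E6 : b3*y4 - b4*y3 = 0)
    (E7 : c1*y3 - c2*y1 = 0) (E8 : c2*y4 - c3*y2 = 0)
    (W1 : a1*w2 + d1*y3 - y1*d2 - w1*a3 = 0) (W2 : a2*w3 + d2*y4 - y2*d3 - w2*a4 = 0)
    (W3 : b1*w2 + g1*y3 - y1*g2 - w1*b3 = 0) (W4 : b2*w3 + g2*y4 - y2*g3 - w2*b4 = 0)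
    (G1 : a1*u2 + d1*w3 + e1*y4 - y1*e2 - w1*d3 - u1*a4 = 0)
    (G2 : b1*u2 + g1*w3 + n1*y4 - y1*n2 - w1*g3 - u1*b4 = 0)
    (V5 : c1*w3 + r1*y4 - y1*r2 - w1*c3 = 0)
    (hind : ∀ α β : K, α*p1 + β*q1 = 0 → α*p2 + β*q2 = 0 → α*z1 + β*z2 = 0 →
      α = 0 ∧ β = 0)
    (hma : a1*m2 - a4*m1 = 0) (hmb : b1*m2 - b4*m1 = 0)
    (hm0 : ¬(m1 = 0 ∧ m2 = 0))
    (hmpq : (m1 = p1 ∧ m2 = p2) ∨ (m1 = q1 ∧ m2 = q2))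
    (hAB : ¬(a1 = 0 ∧ a4 = 0 ∧ b1 = 0 ∧ b4 = 0)) :
    y1 = 0 ∧ y2 = 0 ∧ y3 = 0 ∧ y4 = 0 ∧ w1 = 0 ∧ w2 = 0 ∧ w3 = 0 ∧
      ∃ α β : K, u1 = α*p1 + β*q1 ∧ u2 = α*p2 + β*q2 ∧ v = α*z1 + β*z2 := by
  have hU1 : c1*y1 = 0 := by linear_combination b1*E1 - a1*E4 + y1*hc1e
  have hU2 : c2*y2 = 0 := by linear_combination b2*E2 - a2*E5 + y2*hc2e
  have hU3 : c3*y3 = 0 := by linear_combination b3*E3 - a3*E6 + y3*hc3e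
  have hU4 : c1*y2 = 0 := by linear_combination b2*E1 - a2*E4 + y2*hc1e
  have hU5 : c2*y3 = 0 := by linear_combination b3*E2 - a3*E5 + y3*hc2e
  have hU6 : c3*y4 = 0 := by linear_combination b4*E3 - a4*E6 + y4*hc3e
  have hCYp : p1*y4 - p2*y1 = 0 := by
    linear_combination a1*E8 + c3*E1 - c1*E3 - a4*E7 + y4*hp1e - y1*hp2e
  have hCYq : q1*y4 - q2*y1 = 0 := by
    linear_combination b1*E8 + c3*E4 - c1*E6 - b4*E7 + y4*hq1e - y1*hq2e
  have hCYm : m1*y4 - m2*y1 = 0 := by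
    rcases hmpq with ⟨hA, hB⟩ | ⟨hA, hB⟩
    · rw [hA, hB]; exact hCYp
    · rw [hA, hB]; exact hCYq
  rcases eq_or_ne m1 0 with hm1 | hm1
  · -- vertical branch
    have hm2 : m2 ≠ 0 := fun h => hm0 ⟨hm1, h⟩
    have ha1 : a1 = 0 := by
      have h : a1*m2 = 0 := by linear_combination hma + a4*hm1
      exact (mul_eq_zero.mp h).resolve_right hm2
    have hb1 : b1 = 0 := by
      have h : b1*m2 = 0 := by linear_combination hmb + b4*hm1
      exact (mul_eq_zero.mp h).resolve_right hm2
    have hc1z : c1 = 0 := by rw [hc1e, ha1, hb1]; ring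
    have hp1z : p1 = 0 := by rw [hp1e, ha1, hc1z]; ring
    have hq1z : q1 = 0 := by rw [hq1e, hb1, hc1z]; ring
    have hy1 : y1 = 0 := by
      have h : m2*y1 = 0 := by linear_combination -hCYm + y4*hm1
      exact (mul_eq_zero.mp h).resolve_left hm2
    have hy2 : y2 = 0 := by
      by_contra hy
      have k2 : c2 = 0 := (mul_eq_zero.mp hU2).resolve_right hy
      have k3 : c3 = 0 := by
        have h : c3*y2 = 0 := by linear_combination -E8 + y4*k2
        exact (mul_eq_zero.mp h).resolve_right hy
      apply hm2
      rcases hmpq with ⟨_, hB⟩ | ⟨_, hB⟩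
      · rw [hB, hp2e, k2, k3]; ring
      · rw [hB, hq2e, k2, k3]; ring
    have hy3 : y3 = 0 := by
      by_contra hy
      have k2 : c2 = 0 := (mul_eq_zero.mp hU5).resolve_right hy
      have k3 : c3 = 0 := (mul_eq_zero.mp hU3).resolve_right hy
      apply hm2
      rcases hmpq with ⟨_, hB⟩ | ⟨_, hB⟩
      · rw [hB, hp2e, k2, k3]; ring
      · rw [hB, hq2e, k2, k3]; ring
    have hy4 : y4 = 0 := by
      by_contra hy
      have k3 : c3 = 0 := (mul_eq_zero.mp hU6).resolve_right hy
      have k2 : c2 = 0 := by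
        have h : c2*y4 = 0 := by linear_combination E8 + y2*k3
        exact (mul_eq_zero.mp h).resolve_right hy
      apply hm2
      rcases hmpq with ⟨_, hB⟩ | ⟨_, hB⟩
      · rw [hB, hp2e, k2, k3]; ring
      · rw [hB, hq2e, k2, k3]; ring
    have W1' : a1*w2 - w1*a3 = 0 := by linear_combination W1 - d1*hy3 + d2*hy1
    have W2' : a2*w3 - w2*a4 = 0 := by linear_combination W2 - d2*hy4 + d3*hy2
    have W3' : b1*w2 - w1*b3 = 0 := by linear_combination W3 - g1*hy3 + g2*hy1
    have W4' : b2*w3 - w2*b4 = 0 := by linear_combination W4 - g2*hy4 + g3*hy2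
    have G1' : a1*u2 + d1*w3 - w1*d3 - u1*a4 = 0 := by
      linear_combination G1 - e1*hy4 + e2*hy1
    have G2' : b1*u2 + g1*w3 - w1*g3 - u1*b4 = 0 := by
      linear_combination G2 - n1*hy4 + n2*hy1
    have V5' : c1*w3 - w1*c3 = 0 := by linear_combination V5 - r1*hy4 + r2*hy1
    have hDel : p2*z2 - q2*z1 ≠ 0 := by
      intro h0
      obtain ⟨h1, h2⟩ := hind q2 (-p2) (by rw [hp1z, hq1z]; ring) (by ring)
        (by linear_combination -h0)
      apply hm2
      rcases hmpq with ⟨_, hB⟩ | ⟨_, hB⟩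
      · rw [hB]; exact neg_eq_zero.mp h2
      · rw [hB]; exact h1
    have hw1 : w1 = 0 := by
      by_contra hw
      have k3 : c3 = 0 := by
        have h : c3*w1 = 0 := by linear_combination -V5' + w3*hc1z
        exact (mul_eq_zero.mp h).resolve_right hw
      have S1v : p2*b4 - q2*a4 = 0 := by
        linear_combination b4*hp2e - a4*hq2e + (a2*b4 - a4*b2)*k3
      exact hDel (by linear_combination p2*hz2e - q2*hz1e + p2*r2*hb1 - q2*r2*ha1
        + (p2*g1 - q2*d1)*k3 - (p2*g3 - q2*d3)*hc1z - r1*S1v)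
    have hw2 : w2 = 0 := by
      by_contra hw
      have hD24 : a2*b4 - a4*b2 = 0 := by
        have h : (a2*b4 - a4*b2)*w2 = 0 := by linear_combination b2*W2' - a2*W4'
        exact (mul_eq_zero.mp h).resolve_right hw
      rcases eq_or_ne w3 0 with hw3c | hw3c
      · have ha4 : a4 = 0 := by
          have h : a4*w2 = 0 := by linear_combination -W2' + a2*hw3c
          exact (mul_eq_zero.mp h).resolve_right hw
        have hb4 : b4 = 0 := by
          have h : b4*w2 = 0 := by linear_combination -W4' + b2*hw3c
          exact (mul_eq_zero.mp h).resolve_right hw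
        exact hAB ⟨ha1, ha4, hb1, hb4⟩
      · have T1v : a4*g1 - b4*d1 = 0 := by
          have h : (a4*g1 - b4*d1)*w3 = 0 := by
            linear_combination -b4*G1' + a4*G2' + u2*b4*ha1 - u2*a4*hb1
              + (a4*g3 - b4*d3)*hw1
          exact (mul_eq_zero.mp h).resolve_right hw3c
        have T2v : a2*g1 - b2*d1 = 0 := by
          have h : (a2*g1 - b2*d1)*w3 = 0 := by
            linear_combination g1*W2' - d1*W4' + w2*T1v
          exact (mul_eq_zero.mp h).resolve_right hw3c
        have P0v : p2*g1 - q2*d1 = 0 := by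
          linear_combination g1*hp2e - d1*hq2e + c3*T2v - c2*T1v
        have S1v : p2*b4 - q2*a4 = 0 := by
          linear_combination b4*hp2e - a4*hq2e + c3*hD24
        exact hDel (by linear_combination p2*hz2e - q2*hz1e + p2*r2*hb1 - q2*r2*ha1
          + c3*P0v - (p2*g3 - q2*d3)*hc1z - r1*S1v)
    have hw3 : w3 = 0 := by
      by_contra hw
      have ha2 : a2 = 0 := by
        have h : a2*w3 = 0 := by linear_combination W2' + a4*hw2
        exact (mul_eq_zero.mp h).resolve_right hw
      have hb2 : b2 = 0 := by
        have h : b2*w3 = 0 := by linear_combination W4' + b4*hw2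
        exact (mul_eq_zero.mp h).resolve_right hw
      have k2 : c2 = 0 := by rw [hc2e, ha2, hb2]; ring
      apply hm2
      rcases hmpq with ⟨_, hB⟩ | ⟨_, hB⟩
      · rw [hB, hp2e, ha2, k2]; ring
      · rw [hB, hq2e, hb2, k2]; ring
    have hu1 : u1 = 0 := by
      have hua : u1*a4 = 0 := by linear_combination -G1' + u2*ha1 + d1*hw3 - d3*hw1
      have hub : u1*b4 = 0 := by linear_combination -G2' + u2*hb1 + g1*hw3 - g3*hw1
      rcases eq_or_ne a4 0 with ha4 | ha4
      · rcases eq_or_ne b4 0 with hb4 | hb4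
        · exact absurd ⟨ha1, ha4, hb1, hb4⟩ hAB
        · exact (mul_eq_zero.mp hub).resolve_right hb4
      · exact (mul_eq_zero.mp hua).resolve_right ha4
    refine ⟨hy1, hy2, hy3, hy4, hw1, hw2, hw3,
      (u2*z2 - v*q2)/(p2*z2 - q2*z1), (v*p2 - u2*z1)/(p2*z2 - q2*z1), ?_, ?_, ?_⟩
    · rw [hu1, hp1z, hq1z]; ring
    · rw [div_mul_eq_mul_div, div_mul_eq_mul_div, ← add_div, eq_div_iff hDel]
      ring
    · rw [div_mul_eq_mul_div, div_mul_eq_mul_div, ← add_div, eq_div_iff hDel]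
      ring
  · -- nonvertical branch
    have hy1 : y1 = 0 := by
      by_contra hy
      have k1 : c1 = 0 := (mul_eq_zero.mp hU1).resolve_right hy
      have k2 : c2 = 0 := by
        have h : c2*y1 = 0 := by linear_combination -E7 + y3*k1
        exact (mul_eq_zero.mp h).resolve_right hy
      apply hm1
      rcases hmpq with ⟨hA, _⟩ | ⟨hA, _⟩
      · rw [hA, hp1e, k1, k2]; ring
      · rw [hA, hq1e, k1, k2]; ring
    have hy4 : y4 = 0 := by
      have h : m1*y4 = 0 := by linear_combination hCYm + m2*hy1
      exact (mul_eq_zero.mp h).resolve_left hm1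
    have hy2 : y2 = 0 := by
      by_contra hy
      have k1 : c1 = 0 := (mul_eq_zero.mp hU4).resolve_right hy
      have k2 : c2 = 0 := (mul_eq_zero.mp hU2).resolve_right hy
      apply hm1
      rcases hmpq with ⟨hA, _⟩ | ⟨hA, _⟩
      · rw [hA, hp1e, k1, k2]; ring
      · rw [hA, hq1e, k1, k2]; ring
    have hy3 : y3 = 0 := by
      by_contra hy
      have k2 : c2 = 0 := (mul_eq_zero.mp hU5).resolve_right hy
      have k1 : c1 = 0 := by
        have h : c1*y3 = 0 := by linear_combination E7 + y1*k2
        exact (mul_eq_zero.mp h).resolve_right hy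
      apply hm1
      rcases hmpq with ⟨hA, _⟩ | ⟨hA, _⟩
      · rw [hA, hp1e, k1, k2]; ring
      · rw [hA, hq1e, k1, k2]; ring
    have W1' : a1*w2 - w1*a3 = 0 := by linear_combination W1 - d1*hy3 + d2*hy1
    have W2' : a2*w3 - w2*a4 = 0 := by linear_combination W2 - d2*hy4 + d3*hy2
    have W3' : b1*w2 - w1*b3 = 0 := by linear_combination W3 - g1*hy3 + g2*hy1
    have W4' : b2*w3 - w2*b4 = 0 := by linear_combination W4 - g2*hy4 + g3*hy2
    have G1' : a1*u2 + d1*w3 - w1*d3 - u1*a4 = 0 := by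
      linear_combination G1 - e1*hy4 + e2*hy1
    have G2' : b1*u2 + g1*w3 - w1*g3 - u1*b4 = 0 := by
      linear_combination G2 - n1*hy4 + n2*hy1
    have V5' : c1*w3 - w1*c3 = 0 := by linear_combination V5 - r1*hy4 + r2*hy1
    have hD14 : a1*b4 - a4*b1 = 0 := by
      have h : m1*(a1*b4 - a4*b1) = 0 := by linear_combination b1*hma - a1*hmb
      exact (mul_eq_zero.mp h).resolve_left hm1
    have hP : m1*p2 - m2*p1 = 0 := by
      by_contra hX
      refine hAB ⟨?_, ?_, ?_, ?_⟩
      · have h : a1*(m1*p2 - m2*p1) = 0 := by linear_combination m1*ca - p1*hma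
        exact (mul_eq_zero.mp h).resolve_right hX
      · have h : a4*(m1*p2 - m2*p1) = 0 := by linear_combination m2*ca - p2*hma
        exact (mul_eq_zero.mp h).resolve_right hX
      · have h : b1*(m1*p2 - m2*p1) = 0 := by linear_combination m1*cb - p1*hmb
        exact (mul_eq_zero.mp h).resolve_right hX
      · have h : b4*(m1*p2 - m2*p1) = 0 := by linear_combination m2*cb - p2*hmb
        exact (mul_eq_zero.mp h).resolve_right hX
    have hQ : m1*q2 - m2*q1 = 0 := by
      by_contra hX
      refine hAB ⟨?_, ?_, ?_, ?_⟩
      · have h : a1*(m1*q2 - m2*q1) = 0 := by linear_combination m1*caq - q1*hma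
        exact (mul_eq_zero.mp h).resolve_right hX
      · have h : a4*(m1*q2 - m2*q1) = 0 := by linear_combination m2*caq - q2*hma
        exact (mul_eq_zero.mp h).resolve_right hX
      · have h : b1*(m1*q2 - m2*q1) = 0 := by linear_combination m1*cbq - q1*hmb
        exact (mul_eq_zero.mp h).resolve_right hX
      · have h : b4*(m1*q2 - m2*q1) = 0 := by linear_combination m2*cbq - q2*hmb
        exact (mul_eq_zero.mp h).resolve_right hX
    have hDel : p1*z2 - q1*z1 ≠ 0 := by
      intro h0
      have hqp : q1*p2 - p1*q2 = 0 := by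
        have h : m1*(q1*p2 - p1*q2) = 0 := by linear_combination q1*hP - p1*hQ
        exact (mul_eq_zero.mp h).resolve_left hm1
      obtain ⟨h1, h2⟩ := hind q1 (-p1) (by ring) (by linear_combination hqp)
        (by linear_combination -h0)
      apply hm1
      rcases hmpq with ⟨hA, _⟩ | ⟨hA, _⟩
      · rw [hA]; exact neg_eq_zero.mp h2
      · rw [hA]; exact h1
    have hw1 : w1 = 0 := by
      by_contra hw
      have hD2 : a1*b3 - a3*b1 = 0 := by
        have h : (a1*b3 - a3*b1)*w1 = 0 := by linear_combination b1*W1' - a1*W3'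
        exact (mul_eq_zero.mp h).resolve_right hw
      have hKW3 : c1*w3 = 0 := by
        linear_combination a1*W4' - b1*W2' + w2*hD14 + w3*hc1e
      have k3 : c3 = 0 := by
        have h : c3*w1 = 0 := by linear_combination hKW3 - V5'
        exact (mul_eq_zero.mp h).resolve_right hw
      have S1 : p1*b1 - q1*a1 = 0 := by
        linear_combination b1*hp1e - a1*hq1e + c1*hD2
      have S2 : p1*b4 - q1*a4 = 0 := by
        linear_combination b4*hp1e - a4*hq1e + c2*hD14 + c1*hc3e - c1*k3
      rcases eq_or_ne c1 0 with k1 | k1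
      · exact hDel (by linear_combination p1*hz2e - q1*hz1e + r2*S1 - r1*S2
          + (p1*g1 - q1*d1)*k3 - (p1*g3 - q1*d3)*k1)
      · have hw3z : w3 = 0 := (mul_eq_zero.mp hKW3).resolve_left k1
        have T1 : b1*d3 - a1*g3 = 0 := by
          have h : (b1*d3 - a1*g3)*w1 = 0 := by
            linear_combination -b1*G1' + a1*G2' + u1*hD14 + (b1*d1 - a1*g1)*hw3z
          exact (mul_eq_zero.mp h).resolve_right hw
        have T2 : a3*g3 - b3*d3 = 0 := by
          have h : (a3*g3 - b3*d3)*w1 = 0 := by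
            linear_combination -g3*W1' + d3*W3' - w2*T1
          exact (mul_eq_zero.mp h).resolve_right hw
        have P0 : p1*g3 - q1*d3 = 0 := by
          linear_combination g3*hp1e - d3*hq1e - c2*T1 - c1*T2
        exact hDel (by linear_combination p1*hz2e - q1*hz1e + r2*S1 - r1*S2
          + (p1*g1 - q1*d1)*k3 - c1*P0)
    have hw2 : w2 = 0 := by
      by_contra hw
      have ha1z : a1 = 0 := by
        have h : a1*w2 = 0 := by linear_combination W1' + a3*hw1
        exact (mul_eq_zero.mp h).resolve_right hw
      have hb1z : b1 = 0 := by
        have h : b1*w2 = 0 := by linear_combination W3' + b3*hw1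
        exact (mul_eq_zero.mp h).resolve_right hw
      have ha4 : a4 = 0 := by
        have h : a4*m1 = 0 := by linear_combination -hma + m2*ha1z
        exact (mul_eq_zero.mp h).resolve_right hm1
      have hb4 : b4 = 0 := by
        have h : b4*m1 = 0 := by linear_combination -hmb + m2*hb1z
        exact (mul_eq_zero.mp h).resolve_right hm1
      exact hAB ⟨ha1z, ha4, hb1z, hb4⟩
    have hw3 : w3 = 0 := by
      by_contra hw
      have ha2 : a2 = 0 := by
        have h : a2*w3 = 0 := by linear_combination W2' + a4*hw2
        exact (mul_eq_zero.mp h).resolve_right hw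
      have hb2 : b2 = 0 := by
        have h : b2*w3 = 0 := by linear_combination W4' + b4*hw2
        exact (mul_eq_zero.mp h).resolve_right hw
      have k1 : c1 = 0 := by rw [hc1e, ha2, hb2]; ring
      have k2 : c2 = 0 := by rw [hc2e, ha2, hb2]; ring
      apply hm1
      rcases hmpq with ⟨hA, _⟩ | ⟨hA, _⟩
      · rw [hA, hp1e, k1, k2]; ring
      · rw [hA, hq1e, k1, k2]; ring
    have G1'' : a1*u2 - u1*a4 = 0 := by linear_combination G1' - d1*hw3 + d3*hw1
    have G2'' : b1*u2 - u1*b4 = 0 := by linear_combination G2' - g1*hw3 + g3*hw1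
    have hUM : m1*u2 - m2*u1 = 0 := by
      by_contra hX
      refine hAB ⟨?_, ?_, ?_, ?_⟩
      · have h : a1*(m1*u2 - m2*u1) = 0 := by linear_combination m1*G1'' - u1*hma
        exact (mul_eq_zero.mp h).resolve_right hX
      · have h : a4*(m1*u2 - m2*u1) = 0 := by linear_combination m2*G1'' - u2*hma
        exact (mul_eq_zero.mp h).resolve_right hX
      · have h : b1*(m1*u2 - m2*u1) = 0 := by linear_combination m1*G2'' - u1*hmb
        exact (mul_eq_zero.mp h).resolve_right hX
      · have h : b4*(m1*u2 - m2*u1) = 0 := by linear_combination m2*G2'' - u2*hmb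
        exact (mul_eq_zero.mp h).resolve_right hX
    have key2 : u2*(p1*z2 - q1*z1) = (u1*z2 - v*q1)*p2 + (v*p1 - u1*z1)*q2 := by
      apply mul_left_cancel₀ hm1
      linear_combination (p1*z2 - q1*z1)*hUM - (u1*z2 - v*q1)*hP - (v*p1 - u1*z1)*hQ
    refine ⟨hy1, hy2, hy3, hy4, hw1, hw2, hw3,
      (u1*z2 - v*q1)/(p1*z2 - q1*z1), (v*p1 - u1*z1)/(p1*z2 - q1*z1), ?_, ?_, ?_⟩
    · rw [div_mul_eq_mul_div, div_mul_eq_mul_div, ← add_div, eq_div_iff hDel]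
      ring
    · rw [div_mul_eq_mul_div, div_mul_eq_mul_div, ← add_div, eq_div_iff hDel]
      linear_combination key2
    · rw [div_mul_eq_mul_div, div_mul_eq_mul_div, ← add_div, eq_div_iff hDel]
      ring

private theorem engineMaster {K : Type*} [Field K]
    {a1 a2 a3 a4 d1 d2 d3 e1 e2 b1 b2 b3 b4 g1 g2 g3 n1 n2
     c1 c2 c3 r1 r2 p1 p2 q1 q2 z1 z2 y1 y2 y3 y4 w1 w2 w3 u1 u2 : K} (v : K)
    (hc1e : c1 = a1*b2 - a2*b1) (hc2e : c2 = a2*b3 - a3*b2) (hc3e : c3 = a3*b4 - a4*b3)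
    (hp1e : p1 = a1*c2 - a3*c1) (hp2e : p2 = a2*c3 - a4*c2)
    (hq1e : q1 = b1*c2 - b3*c1) (hq2e : q2 = b2*c3 - b4*c2)
    (hz1e : z1 = a1*r2 + d1*c3 - c1*d3 - r1*a4)
    (hz2e : z2 = b1*r2 + g1*c3 - c1*g3 - r1*b4)
    (ca : a1*p2 - a4*p1 = 0) (caq : a1*q2 - a4*q1 = 0)
    (cb : b1*p2 - b4*p1 = 0) (cbq : b1*q2 - b4*q1 = 0)
    (E1 : a1*y2 - a2*y1 = 0) (E2 : a2*y3 - a3*y2 = 0) (E3 : a3*y4 - a4*y3 = 0)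
    (E4 : b1*y2 - b2*y1 = 0) (E5 : b2*y3 - b3*y2 = 0) (E6 : b3*y4 - b4*y3 = 0)
    (E7 : c1*y3 - c2*y1 = 0) (E8 : c2*y4 - c3*y2 = 0)
    (W1 : a1*w2 + d1*y3 - y1*d2 - w1*a3 = 0) (W2 : a2*w3 + d2*y4 - y2*d3 - w2*a4 = 0)
    (W3 : b1*w2 + g1*y3 - y1*g2 - w1*b3 = 0) (W4 : b2*w3 + g2*y4 - y2*g3 - w2*b4 = 0)
    (G1 : a1*u2 + d1*w3 + e1*y4 - y1*e2 - w1*d3 - u1*a4 = 0)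
    (G2 : b1*u2 + g1*w3 + n1*y4 - y1*n2 - w1*g3 - u1*b4 = 0)
    (V5 : c1*w3 + r1*y4 - y1*r2 - w1*c3 = 0)
    (hind : ∀ α β : K, α*p1 + β*q1 = 0 → α*p2 + β*q2 = 0 → α*z1 + β*z2 = 0 →
      α = 0 ∧ β = 0) :
    y1 = 0 ∧ y2 = 0 ∧ y3 = 0 ∧ y4 = 0 ∧ w1 = 0 ∧ w2 = 0 ∧ w3 = 0 ∧
      ∃ α β : K, u1 = α*p1 + β*q1 ∧ u2 = α*p2 + β*q2 ∧ v = α*z1 + β*z2 := by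
  have hpq : ¬(p1 = 0 ∧ p2 = 0 ∧ q1 = 0 ∧ q2 = 0) := by
    rintro ⟨k1, k2, k3, k4⟩
    have hz12 := hind z2 (-z1) (by rw [k1, k3]; ring) (by rw [k2, k4]; ring) (by ring)
    have h6 : z1 = 0 := neg_eq_zero.mp hz12.2
    exact one_ne_zero ((hind 1 0 (by rw [k1]; ring) (by rw [k2]; ring)
      (by rw [h6]; ring)).1)
  have hAB : ¬(a1 = 0 ∧ a4 = 0 ∧ b1 = 0 ∧ b4 = 0) := by
    rintro ⟨k1, k2, k3, k4⟩
    apply hpq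
    have hc1z : c1 = 0 := by rw [hc1e, k1, k3]; ring
    have hc3z : c3 = 0 := by rw [hc3e, k2, k4]; ring
    exact ⟨by rw [hp1e, hc1z, k1]; ring, by rw [hp2e, hc3z, k2]; ring,
      by rw [hq1e, hc1z, k3]; ring, by rw [hq2e, hc3z, k4]; ring⟩
  by_cases hp : p1 = 0 ∧ p2 = 0
  · exact engineAux v hc1e hc2e hc3e hp1e hp2e hq1e hq2e hz1e hz2e ca caq cb cbq
      E1 E2 E3 E4 E5 E6 E7 E8 W1 W2 W3 W4 G1 G2 V5 hind caq cbq
      (fun h => hpq ⟨hp.1, hp.2, h.1, h.2⟩) (Or.inr ⟨rfl, rfl⟩) hAB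
  · exact engineAux v hc1e hc2e hc3e hp1e hp2e hq1e hq2e hz1e hz2e ca caq cb cbq
      E1 E2 E3 E4 E5 E6 E7 E8 W1 W2 W3 W4 G1 G2 V5 hind ca cb
      hp (Or.inl ⟨rfl, rfl⟩) hAB

set_option maxHeartbeats 1600000 in
/-- If `X1, X2, X3, Z1, Z2 ∈ n_5(k)` are linearly independent with `[X1,X2] = X3`,
`[X1,X3] = Z1`, `[X2,X3] = Z2` and `[Xi, Zj] = 0`, and `X4 ∈ n_5(k)` commutes with
`X1, X2, X3`, then `X4` lies in the span of `X1, X2, X3, Z1, Z2`. -/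
theorem centralizer_mem_span_L59
    (k : Type*) [Field k] [CharZero k]
    (X1 X2 X3 Z1 Z2 X4 : Matrix (Fin 5) (Fin 5) k)
    (hX1 : X1 ∈ strictUpper k 5) (hX2 : X2 ∈ strictUpper k 5) (hX3 : X3 ∈ strictUpper k 5)
    (hZ1 : Z1 ∈ strictUpper k 5) (hZ2 : Z2 ∈ strictUpper k 5) (hX4 : X4 ∈ strictUpper k 5)
    (hli : LinearIndependent k ![X1, X2, X3, Z1, Z2])
    (h12 : ⁅X1, X2⁆ = X3) (h13 : ⁅X1, X3⁆ = Z1) (h23 : ⁅X2, X3⁆ = Z2)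
    (h1Z1 : ⁅X1, Z1⁆ = 0) (h1Z2 : ⁅X1, Z2⁆ = 0)
    (h2Z1 : ⁅X2, Z1⁆ = 0) (h2Z2 : ⁅X2, Z2⁆ = 0)
    (h3Z1 : ⁅X3, Z1⁆ = 0) (h3Z2 : ⁅X3, Z2⁆ = 0)
    (hc1 : ⁅X1, X4⁆ = 0) (hc2 : ⁅X2, X4⁆ = 0) (hc3 : ⁅X3, X4⁆ = 0) :
    X4 ∈ Submodule.span k ({X1, X2, X3, Z1, Z2} : Set (Matrix (Fin 5) (Fin 5) k)) := by
  rw [Ring.lie_def] at h12 h13 h23 h1Z1 h1Z2 h2Z1 h2Z2 hc1 hc2 hc3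
  have hsuX1 : ∀ i j : Fin 5, j ≤ i → X1 i j = 0 := hX1
  have hsuX2 : ∀ i j : Fin 5, j ≤ i → X2 i j = 0 := hX2
  have hsuX3 : ∀ i j : Fin 5, j ≤ i → X3 i j = 0 := hX3
  have hsuZ1 : ∀ i j : Fin 5, j ≤ i → Z1 i j = 0 := hZ1
  have hsuZ2 : ∀ i j : Fin 5, j ≤ i → Z2 i j = 0 := hZ2
  have hsuX4 : ∀ i j : Fin 5, j ≤ i → X4 i j = 0 := hX4
  have zX1_0_0 : X1 0 0 = 0 := hsuX1 0 0 (by decide)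
  have zX1_1_0 : X1 1 0 = 0 := hsuX1 1 0 (by decide)
  have zX1_1_1 : X1 1 1 = 0 := hsuX1 1 1 (by decide)
  have zX1_2_0 : X1 2 0 = 0 := hsuX1 2 0 (by decide)
  have zX1_2_1 : X1 2 1 = 0 := hsuX1 2 1 (by decide)
  have zX1_2_2 : X1 2 2 = 0 := hsuX1 2 2 (by decide)
  have zX1_3_0 : X1 3 0 = 0 := hsuX1 3 0 (by decide)
  have zX1_3_1 : X1 3 1 = 0 := hsuX1 3 1 (by decide)
  have zX1_3_2 : X1 3 2 = 0 := hsuX1 3 2 (by decide)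
  have zX1_3_3 : X1 3 3 = 0 := hsuX1 3 3 (by decide)
  have zX1_4_0 : X1 4 0 = 0 := hsuX1 4 0 (by decide)
  have zX1_4_1 : X1 4 1 = 0 := hsuX1 4 1 (by decide)
  have zX1_4_2 : X1 4 2 = 0 := hsuX1 4 2 (by decide)
  have zX1_4_3 : X1 4 3 = 0 := hsuX1 4 3 (by decide)
  have zX1_4_4 : X1 4 4 = 0 := hsuX1 4 4 (by decide)
  have zX2_0_0 : X2 0 0 = 0 := hsuX2 0 0 (by decide)
  have zX2_1_0 : X2 1 0 = 0 := hsuX2 1 0 (by decide)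
  have zX2_1_1 : X2 1 1 = 0 := hsuX2 1 1 (by decide)
  have zX2_2_0 : X2 2 0 = 0 := hsuX2 2 0 (by decide)
  have zX2_2_1 : X2 2 1 = 0 := hsuX2 2 1 (by decide)
  have zX2_2_2 : X2 2 2 = 0 := hsuX2 2 2 (by decide)
  have zX2_3_0 : X2 3 0 = 0 := hsuX2 3 0 (by decide)
  have zX2_3_1 : X2 3 1 = 0 := hsuX2 3 1 (by decide)
  have zX2_3_2 : X2 3 2 = 0 := hsuX2 3 2 (by decide)
  have zX2_3_3 : X2 3 3 = 0 := hsuX2 3 3 (by decide)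
  have zX2_4_0 : X2 4 0 = 0 := hsuX2 4 0 (by decide)
  have zX2_4_1 : X2 4 1 = 0 := hsuX2 4 1 (by decide)
  have zX2_4_2 : X2 4 2 = 0 := hsuX2 4 2 (by decide)
  have zX2_4_3 : X2 4 3 = 0 := hsuX2 4 3 (by decide)
  have zX2_4_4 : X2 4 4 = 0 := hsuX2 4 4 (by decide)
  have zX3_0_0 : X3 0 0 = 0 := hsuX3 0 0 (by decide)
  have zX3_1_0 : X3 1 0 = 0 := hsuX3 1 0 (by decide)
  have zX3_1_1 : X3 1 1 = 0 := hsuX3 1 1 (by decide)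
  have zX3_2_0 : X3 2 0 = 0 := hsuX3 2 0 (by decide)
  have zX3_2_1 : X3 2 1 = 0 := hsuX3 2 1 (by decide)
  have zX3_2_2 : X3 2 2 = 0 := hsuX3 2 2 (by decide)
  have zX3_3_0 : X3 3 0 = 0 := hsuX3 3 0 (by decide)
  have zX3_3_1 : X3 3 1 = 0 := hsuX3 3 1 (by decide)
  have zX3_3_2 : X3 3 2 = 0 := hsuX3 3 2 (by decide)
  have zX3_3_3 : X3 3 3 = 0 := hsuX3 3 3 (by decide)
  have zX3_4_0 : X3 4 0 = 0 := hsuX3 4 0 (by decide)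
  have zX3_4_1 : X3 4 1 = 0 := hsuX3 4 1 (by decide)
  have zX3_4_2 : X3 4 2 = 0 := hsuX3 4 2 (by decide)
  have zX3_4_3 : X3 4 3 = 0 := hsuX3 4 3 (by decide)
  have zX3_4_4 : X3 4 4 = 0 := hsuX3 4 4 (by decide)
  have zZ1_0_0 : Z1 0 0 = 0 := hsuZ1 0 0 (by decide)
  have zZ1_1_0 : Z1 1 0 = 0 := hsuZ1 1 0 (by decide)
  have zZ1_1_1 : Z1 1 1 = 0 := hsuZ1 1 1 (by decide)
  have zZ1_2_0 : Z1 2 0 = 0 := hsuZ1 2 0 (by decide)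
  have zZ1_2_1 : Z1 2 1 = 0 := hsuZ1 2 1 (by decide)
  have zZ1_2_2 : Z1 2 2 = 0 := hsuZ1 2 2 (by decide)
  have zZ1_3_0 : Z1 3 0 = 0 := hsuZ1 3 0 (by decide)
  have zZ1_3_1 : Z1 3 1 = 0 := hsuZ1 3 1 (by decide)
  have zZ1_3_2 : Z1 3 2 = 0 := hsuZ1 3 2 (by decide)
  have zZ1_3_3 : Z1 3 3 = 0 := hsuZ1 3 3 (by decide)
  have zZ1_4_0 : Z1 4 0 = 0 := hsuZ1 4 0 (by decide)
  have zZ1_4_1 : Z1 4 1 = 0 := hsuZ1 4 1 (by decide)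
  have zZ1_4_2 : Z1 4 2 = 0 := hsuZ1 4 2 (by decide)
  have zZ1_4_3 : Z1 4 3 = 0 := hsuZ1 4 3 (by decide)
  have zZ1_4_4 : Z1 4 4 = 0 := hsuZ1 4 4 (by decide)
  have zZ2_0_0 : Z2 0 0 = 0 := hsuZ2 0 0 (by decide)
  have zZ2_1_0 : Z2 1 0 = 0 := hsuZ2 1 0 (by decide)
  have zZ2_1_1 : Z2 1 1 = 0 := hsuZ2 1 1 (by decide)
  have zZ2_2_0 : Z2 2 0 = 0 := hsuZ2 2 0 (by decide)
  have zZ2_2_1 : Z2 2 1 = 0 := hsuZ2 2 1 (by decide)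
  have zZ2_2_2 : Z2 2 2 = 0 := hsuZ2 2 2 (by decide)
  have zZ2_3_0 : Z2 3 0 = 0 := hsuZ2 3 0 (by decide)
  have zZ2_3_1 : Z2 3 1 = 0 := hsuZ2 3 1 (by decide)
  have zZ2_3_2 : Z2 3 2 = 0 := hsuZ2 3 2 (by decide)
  have zZ2_3_3 : Z2 3 3 = 0 := hsuZ2 3 3 (by decide)
  have zZ2_4_0 : Z2 4 0 = 0 := hsuZ2 4 0 (by decide)
  have zZ2_4_1 : Z2 4 1 = 0 := hsuZ2 4 1 (by decide)
  have zZ2_4_2 : Z2 4 2 = 0 := hsuZ2 4 2 (by decide)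
  have zZ2_4_3 : Z2 4 3 = 0 := hsuZ2 4 3 (by decide)
  have zZ2_4_4 : Z2 4 4 = 0 := hsuZ2 4 4 (by decide)
  have zX4_0_0 : X4 0 0 = 0 := hsuX4 0 0 (by decide)
  have zX4_1_0 : X4 1 0 = 0 := hsuX4 1 0 (by decide)
  have zX4_1_1 : X4 1 1 = 0 := hsuX4 1 1 (by decide)
  have zX4_2_0 : X4 2 0 = 0 := hsuX4 2 0 (by decide)
  have zX4_2_1 : X4 2 1 = 0 := hsuX4 2 1 (by decide)
  have zX4_2_2 : X4 2 2 = 0 := hsuX4 2 2 (by decide)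
  have zX4_3_0 : X4 3 0 = 0 := hsuX4 3 0 (by decide)
  have zX4_3_1 : X4 3 1 = 0 := hsuX4 3 1 (by decide)
  have zX4_3_2 : X4 3 2 = 0 := hsuX4 3 2 (by decide)
  have zX4_3_3 : X4 3 3 = 0 := hsuX4 3 3 (by decide)
  have zX4_4_0 : X4 4 0 = 0 := hsuX4 4 0 (by decide)
  have zX4_4_1 : X4 4 1 = 0 := hsuX4 4 1 (by decide)
  have zX4_4_2 : X4 4 2 = 0 := hsuX4 4 2 (by decide)
  have zX4_4_3 : X4 4 3 = 0 := hsuX4 4 3 (by decide)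
  have zX4_4_4 : X4 4 4 = 0 := hsuX4 4 4 (by decide)
  have zsX3_0_1 : X3 0 1 = 0 := by
    have h := congrFun (congrFun h12 (0:Fin 5)) (1:Fin 5)
    simp only [Matrix.sub_apply, Matrix.mul_apply, Matrix.zero_apply, Fin.sum_univ_five, zX1_0_0, zX1_1_0, zX1_1_1, zX1_2_0, zX1_2_1, zX1_2_2, zX1_3_0, zX1_3_1, zX1_3_2, zX1_3_3, zX1_4_0, zX1_4_1, zX1_4_2, zX1_4_3, zX1_4_4, zX2_0_0, zX2_1_0, zX2_1_1, zX2_2_0, zX2_2_1, zX2_2_2, zX2_3_0, zX2_3_1, zX2_3_2, zX2_3_3, zX2_4_0, zX2_4_1, zX2_4_2, zX2_4_3, zX2_4_4, zero_mul, mul_zero, add_zero, zero_add, sub_zero, zero_sub, neg_zero, neg_neg] at h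
    linear_combination -h
  have zsX3_1_2 : X3 1 2 = 0 := by
    have h := congrFun (congrFun h12 (1:Fin 5)) (2:Fin 5)
    simp only [Matrix.sub_apply, Matrix.mul_apply, Matrix.zero_apply, Fin.sum_univ_five, zX1_0_0, zX1_1_0, zX1_1_1, zX1_2_0, zX1_2_1, zX1_2_2, zX1_3_0, zX1_3_1, zX1_3_2, zX1_3_3, zX1_4_0, zX1_4_1, zX1_4_2, zX1_4_3, zX1_4_4, zX2_0_0, zX2_1_0, zX2_1_1, zX2_2_0, zX2_2_1, zX2_2_2, zX2_3_0, zX2_3_1, zX2_3_2, zX2_3_3, zX2_4_0, zX2_4_1, zX2_4_2, zX2_4_3, zX2_4_4, zero_mul, mul_zero, add_zero, zero_add, sub_zero, zero_sub, neg_zero, neg_neg] at h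
    linear_combination -h
  have zsX3_2_3 : X3 2 3 = 0 := by
    have h := congrFun (congrFun h12 (2:Fin 5)) (3:Fin 5)
    simp only [Matrix.sub_apply, Matrix.mul_apply, Matrix.zero_apply, Fin.sum_univ_five, zX1_0_0, zX1_1_0, zX1_1_1, zX1_2_0, zX1_2_1, zX1_2_2, zX1_3_0, zX1_3_1, zX1_3_2, zX1_3_3, zX1_4_0, zX1_4_1, zX1_4_2, zX1_4_3, zX1_4_4, zX2_0_0, zX2_1_0, zX2_1_1, zX2_2_0, zX2_2_1, zX2_2_2, zX2_3_0, zX2_3_1, zX2_3_2, zX2_3_3, zX2_4_0, zX2_4_1, zX2_4_2, zX2_4_3, zX2_4_4, zero_mul, mul_zero, add_zero, zero_add, sub_zero, zero_sub, neg_zero, neg_neg] at h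
    linear_combination -h
  have zsX3_3_4 : X3 3 4 = 0 := by
    have h := congrFun (congrFun h12 (3:Fin 5)) (4:Fin 5)
    simp only [Matrix.sub_apply, Matrix.mul_apply, Matrix.zero_apply, Fin.sum_univ_five, zX1_0_0, zX1_1_0, zX1_1_1, zX1_2_0, zX1_2_1, zX1_2_2, zX1_3_0, zX1_3_1, zX1_3_2, zX1_3_3, zX1_4_0, zX1_4_1, zX1_4_2, zX1_4_3, zX1_4_4, zX2_0_0, zX2_1_0, zX2_1_1, zX2_2_0, zX2_2_1, zX2_2_2, zX2_3_0, zX2_3_1, zX2_3_2, zX2_3_3, zX2_4_0, zX2_4_1, zX2_4_2, zX2_4_3, zX2_4_4, zero_mul, mul_zero, add_zero, zero_add, sub_zero, zero_sub, neg_zero, neg_neg] at h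
    linear_combination -h
  have hc1E : X3 0 2 = X1 0 1 * X2 1 2 - X1 1 2 * X2 0 1 := by
    have h := congrFun (congrFun h12 (0:Fin 5)) (2:Fin 5)
    simp only [Matrix.sub_apply, Matrix.mul_apply, Matrix.zero_apply, Fin.sum_univ_five, zX1_0_0, zX1_1_0, zX1_1_1, zX1_2_0, zX1_2_1, zX1_2_2, zX1_3_0, zX1_3_1, zX1_3_2, zX1_3_3, zX1_4_0, zX1_4_1, zX1_4_2, zX1_4_3, zX1_4_4, zX2_0_0, zX2_1_0, zX2_1_1, zX2_2_0, zX2_2_1, zX2_2_2, zX2_3_0, zX2_3_1, zX2_3_2, zX2_3_3, zX2_4_0, zX2_4_1, zX2_4_2, zX2_4_3, zX2_4_4, zero_mul, mul_zero, add_zero, zero_add, sub_zero, zero_sub, neg_zero, neg_neg] at h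
    linear_combination -h
  have hc2E : X3 1 3 = X1 1 2 * X2 2 3 - X1 2 3 * X2 1 2 := by
    have h := congrFun (congrFun h12 (1:Fin 5)) (3:Fin 5)
    simp only [Matrix.sub_apply, Matrix.mul_apply, Matrix.zero_apply, Fin.sum_univ_five, zX1_0_0, zX1_1_0, zX1_1_1, zX1_2_0, zX1_2_1, zX1_2_2, zX1_3_0, zX1_3_1, zX1_3_2, zX1_3_3, zX1_4_0, zX1_4_1, zX1_4_2, zX1_4_3, zX1_4_4, zX2_0_0, zX2_1_0, zX2_1_1, zX2_2_0, zX2_2_1, zX2_2_2, zX2_3_0, zX2_3_1, zX2_3_2, zX2_3_3, zX2_4_0, zX2_4_1, zX2_4_2, zX2_4_3, zX2_4_4, zero_mul, mul_zero, add_zero, zero_add, sub_zero, zero_sub, neg_zero, neg_neg] at h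
    linear_combination -h
  have hc3E : X3 2 4 = X1 2 3 * X2 3 4 - X1 3 4 * X2 2 3 := by
    have h := congrFun (congrFun h12 (2:Fin 5)) (4:Fin 5)
    simp only [Matrix.sub_apply, Matrix.mul_apply, Matrix.zero_apply, Fin.sum_univ_five, zX1_0_0, zX1_1_0, zX1_1_1, zX1_2_0, zX1_2_1, zX1_2_2, zX1_3_0, zX1_3_1, zX1_3_2, zX1_3_3, zX1_4_0, zX1_4_1, zX1_4_2, zX1_4_3, zX1_4_4, zX2_0_0, zX2_1_0, zX2_1_1, zX2_2_0, zX2_2_1, zX2_2_2, zX2_3_0, zX2_3_1, zX2_3_2, zX2_3_3, zX2_4_0, zX2_4_1, zX2_4_2, zX2_4_3, zX2_4_4, zero_mul, mul_zero, add_zero, zero_add, sub_zero, zero_sub, neg_zero, neg_neg] at h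
    linear_combination -h
  have zsZ1_0_1 : Z1 0 1 = 0 := by
    have h := congrFun (congrFun h13 (0:Fin 5)) (1:Fin 5)
    simp only [Matrix.sub_apply, Matrix.mul_apply, Matrix.zero_apply, Fin.sum_univ_five, zX1_0_0, zX1_1_0, zX1_1_1, zX1_2_0, zX1_2_1, zX1_2_2, zX1_3_0, zX1_3_1, zX1_3_2, zX1_3_3, zX1_4_0, zX1_4_1, zX1_4_2, zX1_4_3, zX1_4_4, zX2_0_0, zX2_1_0, zX2_1_1, zX2_2_0, zX2_2_1, zX2_2_2, zX2_3_0, zX2_3_1, zX2_3_2, zX2_3_3, zX2_4_0, zX2_4_1, zX2_4_2, zX2_4_3, zX2_4_4, zX3_0_0, zX3_1_0, zX3_1_1, zX3_2_0, zX3_2_1, zX3_2_2, zX3_3_0, zX3_3_1, zX3_3_2, zX3_3_3, zX3_4_0, zX3_4_1, zX3_4_2, zX3_4_3, zX3_4_4, zsX3_0_1, zsX3_1_2, zsX3_2_3, zsX3_3_4, zero_mul, mul_zero, add_zero, zero_add, sub_zero, zero_sub, neg_zero, neg_neg] at h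
    linear_combination -h
  have zsZ1_1_2 : Z1 1 2 = 0 := by
    have h := congrFun (congrFun h13 (1:Fin 5)) (2:Fin 5)
    simp only [Matrix.sub_apply, Matrix.mul_apply, Matrix.zero_apply, Fin.sum_univ_five, zX1_0_0, zX1_1_0, zX1_1_1, zX1_2_0, zX1_2_1, zX1_2_2, zX1_3_0, zX1_3_1, zX1_3_2, zX1_3_3, zX1_4_0, zX1_4_1, zX1_4_2, zX1_4_3, zX1_4_4, zX2_0_0, zX2_1_0, zX2_1_1, zX2_2_0, zX2_2_1, zX2_2_2, zX2_3_0, zX2_3_1, zX2_3_2, zX2_3_3, zX2_4_0, zX2_4_1, zX2_4_2, zX2_4_3, zX2_4_4, zX3_0_0, zX3_1_0, zX3_1_1, zX3_2_0, zX3_2_1, zX3_2_2, zX3_3_0, zX3_3_1, zX3_3_2, zX3_3_3, zX3_4_0, zX3_4_1, zX3_4_2, zX3_4_3, zX3_4_4, zsX3_0_1, zsX3_1_2, zsX3_2_3, zsX3_3_4, zero_mul, mul_zero, add_zero, zero_add, sub_zero, zero_sub, neg_zero, neg_neg] at h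
    linear_combination -h
  have zsZ1_2_3 : Z1 2 3 = 0 := by
    have h := congrFun (congrFun h13 (2:Fin 5)) (3:Fin 5)
    simp only [Matrix.sub_apply, Matrix.mul_apply, Matrix.zero_apply, Fin.sum_univ_five, zX1_0_0, zX1_1_0, zX1_1_1, zX1_2_0, zX1_2_1, zX1_2_2, zX1_3_0, zX1_3_1, zX1_3_2, zX1_3_3, zX1_4_0, zX1_4_1, zX1_4_2, zX1_4_3, zX1_4_4, zX2_0_0, zX2_1_0, zX2_1_1, zX2_2_0, zX2_2_1, zX2_2_2, zX2_3_0, zX2_3_1, zX2_3_2, zX2_3_3, zX2_4_0, zX2_4_1, zX2_4_2, zX2_4_3, zX2_4_4, zX3_0_0, zX3_1_0, zX3_1_1, zX3_2_0, zX3_2_1, zX3_2_2, zX3_3_0, zX3_3_1, zX3_3_2, zX3_3_3, zX3_4_0, zX3_4_1, zX3_4_2, zX3_4_3, zX3_4_4, zsX3_0_1, zsX3_1_2, zsX3_2_3, zsX3_3_4, zero_mul, mul_zero, add_zero, zero_add, sub_zero, zero_sub, neg_zero, neg_neg] at h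
    linear_combination -h
  have zsZ1_3_4 : Z1 3 4 = 0 := by
    have h := congrFun (congrFun h13 (3:Fin 5)) (4:Fin 5)
    simp only [Matrix.sub_apply, Matrix.mul_apply, Matrix.zero_apply, Fin.sum_univ_five, zX1_0_0, zX1_1_0, zX1_1_1, zX1_2_0, zX1_2_1, zX1_2_2, zX1_3_0, zX1_3_1, zX1_3_2, zX1_3_3, zX1_4_0, zX1_4_1, zX1_4_2, zX1_4_3, zX1_4_4, zX2_0_0, zX2_1_0, zX2_1_1, zX2_2_0, zX2_2_1, zX2_2_2, zX2_3_0, zX2_3_1, zX2_3_2, zX2_3_3, zX2_4_0, zX2_4_1, zX2_4_2, zX2_4_3, zX2_4_4, zX3_0_0, zX3_1_0, zX3_1_1, zX3_2_0, zX3_2_1, zX3_2_2, zX3_3_0, zX3_3_1, zX3_3_2, zX3_3_3, zX3_4_0, zX3_4_1, zX3_4_2, zX3_4_3, zX3_4_4, zsX3_0_1, zsX3_1_2, zsX3_2_3, zsX3_3_4, zero_mul, mul_zero, add_zero, zero_add, sub_zero, zero_sub, neg_zero, neg_neg] at h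
    linear_combination -h
  have zsZ1_0_2 : Z1 0 2 = 0 := by
    have h := congrFun (congrFun h13 (0:Fin 5)) (2:Fin 5)
    simp only [Matrix.sub_apply, Matrix.mul_apply, Matrix.zero_apply, Fin.sum_univ_five, zX1_0_0, zX1_1_0, zX1_1_1, zX1_2_0, zX1_2_1, zX1_2_2, zX1_3_0, zX1_3_1, zX1_3_2, zX1_3_3, zX1_4_0, zX1_4_1, zX1_4_2, zX1_4_3, zX1_4_4, zX2_0_0, zX2_1_0, zX2_1_1, zX2_2_0, zX2_2_1, zX2_2_2, zX2_3_0, zX2_3_1, zX2_3_2, zX2_3_3, zX2_4_0, zX2_4_1, zX2_4_2, zX2_4_3, zX2_4_4, zX3_0_0, zX3_1_0, zX3_1_1, zX3_2_0, zX3_2_1, zX3_2_2, zX3_3_0, zX3_3_1, zX3_3_2, zX3_3_3, zX3_4_0, zX3_4_1, zX3_4_2, zX3_4_3, zX3_4_4, zsX3_0_1, zsX3_1_2, zsX3_2_3, zsX3_3_4, zero_mul, mul_zero, add_zero, zero_add, sub_zero, zero_sub, neg_zero, neg_neg] at h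
    linear_combination -h
  have zsZ1_1_3 : Z1 1 3 = 0 := by
    have h := congrFun (congrFun h13 (1:Fin 5)) (3:Fin 5)
    simp only [Matrix.sub_apply, Matrix.mul_apply, Matrix.zero_apply, Fin.sum_univ_five, zX1_0_0, zX1_1_0, zX1_1_1, zX1_2_0, zX1_2_1, zX1_2_2, zX1_3_0, zX1_3_1, zX1_3_2, zX1_3_3, zX1_4_0, zX1_4_1, zX1_4_2, zX1_4_3, zX1_4_4, zX2_0_0, zX2_1_0, zX2_1_1, zX2_2_0, zX2_2_1, zX2_2_2, zX2_3_0, zX2_3_1, zX2_3_2, zX2_3_3, zX2_4_0, zX2_4_1, zX2_4_2, zX2_4_3, zX2_4_4, zX3_0_0, zX3_1_0, zX3_1_1, zX3_2_0, zX3_2_1, zX3_2_2, zX3_3_0, zX3_3_1, zX3_3_2, zX3_3_3, zX3_4_0, zX3_4_1, zX3_4_2, zX3_4_3, zX3_4_4, zsX3_0_1, zsX3_1_2, zsX3_2_3, zsX3_3_4, zero_mul, mul_zero, add_zero, zero_add, sub_zero, zero_sub, neg_zero, neg_neg] at h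
    linear_combination -h
  have zsZ1_2_4 : Z1 2 4 = 0 := by
    have h := congrFun (congrFun h13 (2:Fin 5)) (4:Fin 5)
    simp only [Matrix.sub_apply, Matrix.mul_apply, Matrix.zero_apply, Fin.sum_univ_five, zX1_0_0, zX1_1_0, zX1_1_1, zX1_2_0, zX1_2_1, zX1_2_2, zX1_3_0, zX1_3_1, zX1_3_2, zX1_3_3, zX1_4_0, zX1_4_1, zX1_4_2, zX1_4_3, zX1_4_4, zX2_0_0, zX2_1_0, zX2_1_1, zX2_2_0, zX2_2_1, zX2_2_2, zX2_3_0, zX2_3_1, zX2_3_2, zX2_3_3, zX2_4_0, zX2_4_1, zX2_4_2, zX2_4_3, zX2_4_4, zX3_0_0, zX3_1_0, zX3_1_1, zX3_2_0, zX3_2_1, zX3_2_2, zX3_3_0, zX3_3_1, zX3_3_2, zX3_3_3, zX3_4_0, zX3_4_1, zX3_4_2, zX3_4_3, zX3_4_4, zsX3_0_1, zsX3_1_2, zsX3_2_3, zsX3_3_4, zero_mul, mul_zero, add_zero, zero_add, sub_zero, zero_sub, neg_zero, neg_neg] at h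
    linear_combination -h
  have zsZ2_0_1 : Z2 0 1 = 0 := by
    have h := congrFun (congrFun h23 (0:Fin 5)) (1:Fin 5)
    simp only [Matrix.sub_apply, Matrix.mul_apply, Matrix.zero_apply, Fin.sum_univ_five, zX2_0_0, zX2_1_0, zX2_1_1, zX2_2_0, zX2_2_1, zX2_2_2, zX2_3_0, zX2_3_1, zX2_3_2, zX2_3_3, zX2_4_0, zX2_4_1, zX2_4_2, zX2_4_3, zX2_4_4, zX3_0_0, zX3_1_0, zX3_1_1, zX3_2_0, zX3_2_1, zX3_2_2, zX3_3_0, zX3_3_1, zX3_3_2, zX3_3_3, zX3_4_0, zX3_4_1, zX3_4_2, zX3_4_3, zX3_4_4, zsX3_0_1, zsX3_1_2, zsX3_2_3, zsX3_3_4, zero_mul, mul_zero, add_zero, zero_add, sub_zero, zero_sub, neg_zero, neg_neg] at h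
    linear_combination -h
  have zsZ2_1_2 : Z2 1 2 = 0 := by
    have h := congrFun (congrFun h23 (1:Fin 5)) (2:Fin 5)
    simp only [Matrix.sub_apply, Matrix.mul_apply, Matrix.zero_apply, Fin.sum_univ_five, zX2_0_0, zX2_1_0, zX2_1_1, zX2_2_0, zX2_2_1, zX2_2_2, zX2_3_0, zX2_3_1, zX2_3_2, zX2_3_3, zX2_4_0, zX2_4_1, zX2_4_2, zX2_4_3, zX2_4_4, zX3_0_0, zX3_1_0, zX3_1_1, zX3_2_0, zX3_2_1, zX3_2_2, zX3_3_0, zX3_3_1, zX3_3_2, zX3_3_3, zX3_4_0, zX3_4_1, zX3_4_2, zX3_4_3, zX3_4_4, zsX3_0_1, zsX3_1_2, zsX3_2_3, zsX3_3_4, zero_mul, mul_zero, add_zero, zero_add, sub_zero, zero_sub, neg_zero, neg_neg] at h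
    linear_combination -h
  have zsZ2_2_3 : Z2 2 3 = 0 := by
    have h := congrFun (congrFun h23 (2:Fin 5)) (3:Fin 5)
    simp only [Matrix.sub_apply, Matrix.mul_apply, Matrix.zero_apply, Fin.sum_univ_five, zX2_0_0, zX2_1_0, zX2_1_1, zX2_2_0, zX2_2_1, zX2_2_2, zX2_3_0, zX2_3_1, zX2_3_2, zX2_3_3, zX2_4_0, zX2_4_1, zX2_4_2, zX2_4_3, zX2_4_4, zX3_0_0, zX3_1_0, zX3_1_1, zX3_2_0, zX3_2_1, zX3_2_2, zX3_3_0, zX3_3_1, zX3_3_2, zX3_3_3, zX3_4_0, zX3_4_1, zX3_4_2, zX3_4_3, zX3_4_4, zsX3_0_1, zsX3_1_2, zsX3_2_3, zsX3_3_4, zero_mul, mul_zero, add_zero, zero_add, sub_zero, zero_sub, neg_zero, neg_neg] at h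
    linear_combination -h
  have zsZ2_3_4 : Z2 3 4 = 0 := by
    have h := congrFun (congrFun h23 (3:Fin 5)) (4:Fin 5)
    simp only [Matrix.sub_apply, Matrix.mul_apply, Matrix.zero_apply, Fin.sum_univ_five, zX2_0_0, zX2_1_0, zX2_1_1, zX2_2_0, zX2_2_1, zX2_2_2, zX2_3_0, zX2_3_1, zX2_3_2, zX2_3_3, zX2_4_0, zX2_4_1, zX2_4_2, zX2_4_3, zX2_4_4, zX3_0_0, zX3_1_0, zX3_1_1, zX3_2_0, zX3_2_1, zX3_2_2, zX3_3_0, zX3_3_1, zX3_3_2, zX3_3_3, zX3_4_0, zX3_4_1, zX3_4_2, zX3_4_3, zX3_4_4, zsX3_0_1, zsX3_1_2, zsX3_2_3, zsX3_3_4, zero_mul, mul_zero, add_zero, zero_add, sub_zero, zero_sub, neg_zero, neg_neg] at h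
    linear_combination -h
  have zsZ2_0_2 : Z2 0 2 = 0 := by
    have h := congrFun (congrFun h23 (0:Fin 5)) (2:Fin 5)
    simp only [Matrix.sub_apply, Matrix.mul_apply, Matrix.zero_apply, Fin.sum_univ_five, zX2_0_0, zX2_1_0, zX2_1_1, zX2_2_0, zX2_2_1, zX2_2_2, zX2_3_0, zX2_3_1, zX2_3_2, zX2_3_3, zX2_4_0, zX2_4_1, zX2_4_2, zX2_4_3, zX2_4_4, zX3_0_0, zX3_1_0, zX3_1_1, zX3_2_0, zX3_2_1, zX3_2_2, zX3_3_0, zX3_3_1, zX3_3_2, zX3_3_3, zX3_4_0, zX3_4_1, zX3_4_2, zX3_4_3, zX3_4_4, zsX3_0_1, zsX3_1_2, zsX3_2_3, zsX3_3_4, zero_mul, mul_zero, add_zero, zero_add, sub_zero, zero_sub, neg_zero, neg_neg] at h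
    linear_combination -h
  have zsZ2_1_3 : Z2 1 3 = 0 := by
    have h := congrFun (congrFun h23 (1:Fin 5)) (3:Fin 5)
    simp only [Matrix.sub_apply, Matrix.mul_apply, Matrix.zero_apply, Fin.sum_univ_five, zX2_0_0, zX2_1_0, zX2_1_1, zX2_2_0, zX2_2_1, zX2_2_2, zX2_3_0, zX2_3_1, zX2_3_2, zX2_3_3, zX2_4_0, zX2_4_1, zX2_4_2, zX2_4_3, zX2_4_4, zX3_0_0, zX3_1_0, zX3_1_1, zX3_2_0, zX3_2_1, zX3_2_2, zX3_3_0, zX3_3_1, zX3_3_2, zX3_3_3, zX3_4_0, zX3_4_1, zX3_4_2, zX3_4_3, zX3_4_4, zsX3_0_1, zsX3_1_2, zsX3_2_3, zsX3_3_4, zero_mul, mul_zero, add_zero, zero_add, sub_zero, zero_sub, neg_zero, neg_neg] at h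
    linear_combination -h
  have zsZ2_2_4 : Z2 2 4 = 0 := by
    have h := congrFun (congrFun h23 (2:Fin 5)) (4:Fin 5)
    simp only [Matrix.sub_apply, Matrix.mul_apply, Matrix.zero_apply, Fin.sum_univ_five, zX2_0_0, zX2_1_0, zX2_1_1, zX2_2_0, zX2_2_1, zX2_2_2, zX2_3_0, zX2_3_1, zX2_3_2, zX2_3_3, zX2_4_0, zX2_4_1, zX2_4_2, zX2_4_3, zX2_4_4, zX3_0_0, zX3_1_0, zX3_1_1, zX3_2_0, zX3_2_1, zX3_2_2, zX3_3_0, zX3_3_1, zX3_3_2, zX3_3_3, zX3_4_0, zX3_4_1, zX3_4_2, zX3_4_3, zX3_4_4, zsX3_0_1, zsX3_1_2, zsX3_2_3, zsX3_3_4, zero_mul, mul_zero, add_zero, zero_add, sub_zero, zero_sub, neg_zero, neg_neg] at h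
    linear_combination -h
  have hp1E : Z1 0 3 = X1 0 1 * X3 1 3 - X1 2 3 * X3 0 2 := by
    have h := congrFun (congrFun h13 (0:Fin 5)) (3:Fin 5)
    simp only [Matrix.sub_apply, Matrix.mul_apply, Matrix.zero_apply, Fin.sum_univ_five, zX1_0_0, zX1_1_0, zX1_1_1, zX1_2_0, zX1_2_1, zX1_2_2, zX1_3_0, zX1_3_1, zX1_3_2, zX1_3_3, zX1_4_0, zX1_4_1, zX1_4_2, zX1_4_3, zX1_4_4, zX2_0_0, zX2_1_0, zX2_1_1, zX2_2_0, zX2_2_1, zX2_2_2, zX2_3_0, zX2_3_1, zX2_3_2, zX2_3_3, zX2_4_0, zX2_4_1, zX2_4_2, zX2_4_3, zX2_4_4, zX3_0_0, zX3_1_0, zX3_1_1, zX3_2_0, zX3_2_1, zX3_2_2, zX3_3_0, zX3_3_1, zX3_3_2, zX3_3_3, zX3_4_0, zX3_4_1, zX3_4_2, zX3_4_3, zX3_4_4, zsX3_0_1, zsX3_1_2, zsX3_2_3, zsX3_3_4, zero_mul, mul_zero, add_zero, zero_add, sub_zero, zero_sub, neg_zero, neg_neg] at h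
    linear_combination -h
  have hp2E : Z1 1 4 = X1 1 2 * X3 2 4 - X1 3 4 * X3 1 3 := by
    have h := congrFun (congrFun h13 (1:Fin 5)) (4:Fin 5)
    simp only [Matrix.sub_apply, Matrix.mul_apply, Matrix.zero_apply, Fin.sum_univ_five, zX1_0_0, zX1_1_0, zX1_1_1, zX1_2_0, zX1_2_1, zX1_2_2, zX1_3_0, zX1_3_1, zX1_3_2, zX1_3_3, zX1_4_0, zX1_4_1, zX1_4_2, zX1_4_3, zX1_4_4, zX2_0_0, zX2_1_0, zX2_1_1, zX2_2_0, zX2_2_1, zX2_2_2, zX2_3_0, zX2_3_1, zX2_3_2, zX2_3_3, zX2_4_0, zX2_4_1, zX2_4_2, zX2_4_3, zX2_4_4, zX3_0_0, zX3_1_0, zX3_1_1, zX3_2_0, zX3_2_1, zX3_2_2, zX3_3_0, zX3_3_1, zX3_3_2, zX3_3_3, zX3_4_0, zX3_4_1, zX3_4_2, zX3_4_3, zX3_4_4, zsX3_0_1, zsX3_1_2, zsX3_2_3, zsX3_3_4, zero_mul, mul_zero, add_zero, zero_add, sub_zero, zero_sub, neg_zero, neg_neg] at h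
    linear_combination -h
  have hz1E : Z1 0 4 = X1 0 1 * X3 1 4 + X1 0 2 * X3 2 4 - X3 0 2 * X1 2 4 - X3 0 3 * X1 3 4 := by
    have h := congrFun (congrFun h13 (0:Fin 5)) (4:Fin 5)
    simp only [Matrix.sub_apply, Matrix.mul_apply, Matrix.zero_apply, Fin.sum_univ_five, zX1_0_0, zX1_1_0, zX1_1_1, zX1_2_0, zX1_2_1, zX1_2_2, zX1_3_0, zX1_3_1, zX1_3_2, zX1_3_3, zX1_4_0, zX1_4_1, zX1_4_2, zX1_4_3, zX1_4_4, zX2_0_0, zX2_1_0, zX2_1_1, zX2_2_0, zX2_2_1, zX2_2_2, zX2_3_0, zX2_3_1, zX2_3_2, zX2_3_3, zX2_4_0, zX2_4_1, zX2_4_2, zX2_4_3, zX2_4_4, zX3_0_0, zX3_1_0, zX3_1_1, zX3_2_0, zX3_2_1, zX3_2_2, zX3_3_0, zX3_3_1, zX3_3_2, zX3_3_3, zX3_4_0, zX3_4_1, zX3_4_2, zX3_4_3, zX3_4_4, zsX3_0_1, zsX3_1_2, zsX3_2_3, zsX3_3_4, zero_mul, mul_zero, add_zero, zero_add, sub_zero,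 zero_sub, neg_zero, neg_neg] at h
    linear_combination -h
  have hq1E : Z2 0 3 = X2 0 1 * X3 1 3 - X2 2 3 * X3 0 2 := by
    have h := congrFun (congrFun h23 (0:Fin 5)) (3:Fin 5)
    simp only [Matrix.sub_apply, Matrix.mul_apply, Matrix.zero_apply, Fin.sum_univ_five, zX2_0_0, zX2_1_0, zX2_1_1, zX2_2_0, zX2_2_1, zX2_2_2, zX2_3_0, zX2_3_1, zX2_3_2, zX2_3_3, zX2_4_0, zX2_4_1, zX2_4_2, zX2_4_3, zX2_4_4, zX3_0_0, zX3_1_0, zX3_1_1, zX3_2_0, zX3_2_1, zX3_2_2, zX3_3_0, zX3_3_1, zX3_3_2, zX3_3_3, zX3_4_0, zX3_4_1, zX3_4_2, zX3_4_3, zX3_4_4, zsX3_0_1, zsX3_1_2, zsX3_2_3, zsX3_3_4, zero_mul, mul_zero, add_zero, zero_add, sub_zero, zero_sub, neg_zero, neg_neg] at h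
    linear_combination -h
  have hq2E : Z2 1 4 = X2 1 2 * X3 2 4 - X2 3 4 * X3 1 3 := by
    have h := congrFun (congrFun h23 (1:Fin 5)) (4:Fin 5)
    simp only [Matrix.sub_apply, Matrix.mul_apply, Matrix.zero_apply, Fin.sum_univ_five, zX2_0_0, zX2_1_0, zX2_1_1, zX2_2_0, zX2_2_1, zX2_2_2, zX2_3_0, zX2_3_1, zX2_3_2, zX2_3_3, zX2_4_0, zX2_4_1, zX2_4_2, zX2_4_3, zX2_4_4, zX3_0_0, zX3_1_0, zX3_1_1, zX3_2_0, zX3_2_1, zX3_2_2, zX3_3_0, zX3_3_1, zX3_3_2, zX3_3_3, zX3_4_0, zX3_4_1, zX3_4_2, zX3_4_3, zX3_4_4, zsX3_0_1, zsX3_1_2, zsX3_2_3, zsX3_3_4, zero_mul, mul_zero, add_zero, zero_add, sub_zero, zero_sub, neg_zero, neg_neg] at h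
    linear_combination -h
  have hz2E : Z2 0 4 = X2 0 1 * X3 1 4 + X2 0 2 * X3 2 4 - X3 0 2 * X2 2 4 - X3 0 3 * X2 3 4 := by
    have h := congrFun (congrFun h23 (0:Fin 5)) (4:Fin 5)
    simp only [Matrix.sub_apply, Matrix.mul_apply, Matrix.zero_apply, Fin.sum_univ_five, zX2_0_0, zX2_1_0, zX2_1_1, zX2_2_0, zX2_2_1, zX2_2_2, zX2_3_0, zX2_3_1, zX2_3_2, zX2_3_3, zX2_4_0, zX2_4_1, zX2_4_2, zX2_4_3, zX2_4_4, zX3_0_0, zX3_1_0, zX3_1_1, zX3_2_0, zX3_2_1, zX3_2_2, zX3_3_0, zX3_3_1, zX3_3_2, zX3_3_3, zX3_4_0, zX3_4_1, zX3_4_2, zX3_4_3, zX3_4_4, zsX3_0_1, zsX3_1_2, zsX3_2_3, zsX3_3_4, zero_mul, mul_zero, add_zero, zero_add, sub_zero, zero_sub, neg_zero, neg_neg] at h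
    linear_combination -h
  have caE : X1 0 1 * Z1 1 4 - X1 3 4 * Z1 0 3 = 0 := by
    have h := congrFun (congrFun h1Z1 (0:Fin 5)) (4:Fin 5)
    simp only [Matrix.sub_apply, Matrix.mul_apply, Matrix.zero_apply, Fin.sum_univ_five, zX1_0_0, zX1_1_0, zX1_1_1, zX1_2_0, zX1_2_1, zX1_2_2, zX1_3_0, zX1_3_1, zX1_3_2, zX1_3_3, zX1_4_0, zX1_4_1, zX1_4_2, zX1_4_3, zX1_4_4, zZ1_0_0, zZ1_1_0, zZ1_1_1, zZ1_2_0, zZ1_2_1, zZ1_2_2, zZ1_3_0, zZ1_3_1, zZ1_3_2, zZ1_3_3, zZ1_4_0, zZ1_4_1, zZ1_4_2, zZ1_4_3, zZ1_4_4, zsZ1_0_1, zsZ1_1_2, zsZ1_2_3, zsZ1_3_4, zsZ1_0_2, zsZ1_1_3, zsZ1_2_4, zero_mul, mul_zero, add_zero, zero_add, sub_zero, zero_sub, neg_zero, neg_neg] at h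
    linear_combination h
  have caqE : X1 0 1 * Z2 1 4 - X1 3 4 * Z2 0 3 = 0 := by
    have h := congrFun (congrFun h1Z2 (0:Fin 5)) (4:Fin 5)
    simp only [Matrix.sub_apply, Matrix.mul_apply, Matrix.zero_apply, Fin.sum_univ_five, zX1_0_0, zX1_1_0, zX1_1_1, zX1_2_0, zX1_2_1, zX1_2_2, zX1_3_0, zX1_3_1, zX1_3_2, zX1_3_3, zX1_4_0, zX1_4_1, zX1_4_2, zX1_4_3, zX1_4_4, zZ2_0_0, zZ2_1_0, zZ2_1_1, zZ2_2_0, zZ2_2_1, zZ2_2_2, zZ2_3_0, zZ2_3_1, zZ2_3_2, zZ2_3_3, zZ2_4_0, zZ2_4_1, zZ2_4_2, zZ2_4_3, zZ2_4_4, zsZ2_0_1, zsZ2_1_2, zsZ2_2_3, zsZ2_3_4, zsZ2_0_2, zsZ2_1_3, zsZ2_2_4, zero_mul, mul_zero, add_zero, zero_add, sub_zero, zero_sub, neg_zero, neg_neg] at h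
    linear_combination h
  have cbE : X2 0 1 * Z1 1 4 - X2 3 4 * Z1 0 3 = 0 := by
    have h := congrFun (congrFun h2Z1 (0:Fin 5)) (4:Fin 5)
    simp only [Matrix.sub_apply, Matrix.mul_apply, Matrix.zero_apply, Fin.sum_univ_five, zX2_0_0, zX2_1_0, zX2_1_1, zX2_2_0, zX2_2_1, zX2_2_2, zX2_3_0, zX2_3_1, zX2_3_2, zX2_3_3, zX2_4_0, zX2_4_1, zX2_4_2, zX2_4_3, zX2_4_4, zZ1_0_0, zZ1_1_0, zZ1_1_1, zZ1_2_0, zZ1_2_1, zZ1_2_2, zZ1_3_0, zZ1_3_1, zZ1_3_2, zZ1_3_3, zZ1_4_0, zZ1_4_1, zZ1_4_2, zZ1_4_3, zZ1_4_4, zsZ1_0_1, zsZ1_1_2, zsZ1_2_3, zsZ1_3_4, zsZ1_0_2, zsZ1_1_3, zsZ1_2_4, zero_mul, mul_zero, add_zero, zero_add, sub_zero, zero_sub, neg_zero, neg_neg] at h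
    linear_combination h
  have cbqE : X2 0 1 * Z2 1 4 - X2 3 4 * Z2 0 3 = 0 := by
    have h := congrFun (congrFun h2Z2 (0:Fin 5)) (4:Fin 5)
    simp only [Matrix.sub_apply, Matrix.mul_apply, Matrix.zero_apply, Fin.sum_univ_five, zX2_0_0, zX2_1_0, zX2_1_1, zX2_2_0, zX2_2_1, zX2_2_2, zX2_3_0, zX2_3_1, zX2_3_2, zX2_3_3, zX2_4_0, zX2_4_1, zX2_4_2, zX2_4_3, zX2_4_4, zZ2_0_0, zZ2_1_0, zZ2_1_1, zZ2_2_0, zZ2_2_1, zZ2_2_2, zZ2_3_0, zZ2_3_1, zZ2_3_2, zZ2_3_3, zZ2_4_0, zZ2_4_1, zZ2_4_2, zZ2_4_3, zZ2_4_4, zsZ2_0_1, zsZ2_1_2, zsZ2_2_3, zsZ2_3_4, zsZ2_0_2, zsZ2_1_3, zsZ2_2_4, zero_mul, mul_zero, add_zero, zero_add, sub_zero, zero_sub, neg_zero, neg_neg] at h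
    linear_combination h
  have E1E : X1 0 1 * X4 1 2 - X1 1 2 * X4 0 1 = 0 := by
    have h := congrFun (congrFun hc1 (0:Fin 5)) (2:Fin 5)
    simp only [Matrix.sub_apply, Matrix.mul_apply, Matrix.zero_apply, Fin.sum_univ_five, zX1_0_0, zX1_1_0, zX1_1_1, zX1_2_0, zX1_2_1, zX1_2_2, zX1_3_0, zX1_3_1, zX1_3_2, zX1_3_3, zX1_4_0, zX1_4_1, zX1_4_2, zX1_4_3, zX1_4_4, zX4_0_0, zX4_1_0, zX4_1_1, zX4_2_0, zX4_2_1, zX4_2_2, zX4_3_0, zX4_3_1, zX4_3_2, zX4_3_3, zX4_4_0, zX4_4_1, zX4_4_2, zX4_4_3, zX4_4_4, zero_mul, mul_zero, add_zero, zero_add, sub_zero, zero_sub, neg_zero, neg_neg] at h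
    linear_combination h
  have E2E : X1 1 2 * X4 2 3 - X1 2 3 * X4 1 2 = 0 := by
    have h := congrFun (congrFun hc1 (1:Fin 5)) (3:Fin 5)
    simp only [Matrix.sub_apply, Matrix.mul_apply, Matrix.zero_apply, Fin.sum_univ_five, zX1_0_0, zX1_1_0, zX1_1_1, zX1_2_0, zX1_2_1, zX1_2_2, zX1_3_0, zX1_3_1, zX1_3_2, zX1_3_3, zX1_4_0, zX1_4_1, zX1_4_2, zX1_4_3, zX1_4_4, zX4_0_0, zX4_1_0, zX4_1_1, zX4_2_0, zX4_2_1, zX4_2_2, zX4_3_0, zX4_3_1, zX4_3_2, zX4_3_3, zX4_4_0, zX4_4_1, zX4_4_2, zX4_4_3, zX4_4_4, zero_mul, mul_zero, add_zero, zero_add, sub_zero, zero_sub, neg_zero, neg_neg] at h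
    linear_combination h
  have E3E : X1 2 3 * X4 3 4 - X1 3 4 * X4 2 3 = 0 := by
    have h := congrFun (congrFun hc1 (2:Fin 5)) (4:Fin 5)
    simp only [Matrix.sub_apply, Matrix.mul_apply, Matrix.zero_apply, Fin.sum_univ_five, zX1_0_0, zX1_1_0, zX1_1_1, zX1_2_0, zX1_2_1, zX1_2_2, zX1_3_0, zX1_3_1, zX1_3_2, zX1_3_3, zX1_4_0, zX1_4_1, zX1_4_2, zX1_4_3, zX1_4_4, zX4_0_0, zX4_1_0, zX4_1_1, zX4_2_0, zX4_2_1, zX4_2_2, zX4_3_0, zX4_3_1, zX4_3_2, zX4_3_3, zX4_4_0, zX4_4_1, zX4_4_2, zX4_4_3, zX4_4_4, zero_mul, mul_zero, add_zero, zero_add, sub_zero, zero_sub, neg_zero, neg_neg] at h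
    linear_combination h
  have W1E : X1 0 1 * X4 1 3 + X1 0 2 * X4 2 3 - X4 0 1 * X1 1 3 - X4 0 2 * X1 2 3 = 0 := by
    have h := congrFun (congrFun hc1 (0:Fin 5)) (3:Fin 5)
    simp only [Matrix.sub_apply, Matrix.mul_apply, Matrix.zero_apply, Fin.sum_univ_five, zX1_0_0, zX1_1_0, zX1_1_1, zX1_2_0, zX1_2_1, zX1_2_2, zX1_3_0, zX1_3_1, zX1_3_2, zX1_3_3, zX1_4_0, zX1_4_1, zX1_4_2, zX1_4_3, zX1_4_4, zX4_0_0, zX4_1_0, zX4_1_1, zX4_2_0, zX4_2_1, zX4_2_2, zX4_3_0, zX4_3_1, zX4_3_2, zX4_3_3, zX4_4_0, zX4_4_1, zX4_4_2, zX4_4_3, zX4_4_4, zero_mul, mul_zero, add_zero, zero_add, sub_zero, zero_sub, neg_zero, neg_neg] at h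
    linear_combination h
  have W2E : X1 1 2 * X4 2 4 + X1 1 3 * X4 3 4 - X4 1 2 * X1 2 4 - X4 1 3 * X1 3 4 = 0 := by
    have h := congrFun (congrFun hc1 (1:Fin 5)) (4:Fin 5)
    simp only [Matrix.sub_apply, Matrix.mul_apply, Matrix.zero_apply, Fin.sum_univ_five, zX1_0_0, zX1_1_0, zX1_1_1, zX1_2_0, zX1_2_1, zX1_2_2, zX1_3_0, zX1_3_1, zX1_3_2, zX1_3_3, zX1_4_0, zX1_4_1, zX1_4_2, zX1_4_3, zX1_4_4, zX4_0_0, zX4_1_0, zX4_1_1, zX4_2_0, zX4_2_1, zX4_2_2, zX4_3_0, zX4_3_1, zX4_3_2, zX4_3_3, zX4_4_0, zX4_4_1, zX4_4_2, zX4_4_3, zX4_4_4, zero_mul, mul_zero, add_zero, zero_add, sub_zero, zero_sub, neg_zero, neg_neg] at h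
    linear_combination h
  have G1E : X1 0 1 * X4 1 4 + X1 0 2 * X4 2 4 + X1 0 3 * X4 3 4 - X4 0 1 * X1 1 4 - X4 0 2 * X1 2 4 - X4 0 3 * X1 3 4 = 0 := by
    have h := congrFun (congrFun hc1 (0:Fin 5)) (4:Fin 5)
    simp only [Matrix.sub_apply, Matrix.mul_apply, Matrix.zero_apply, Fin.sum_univ_five, zX1_0_0, zX1_1_0, zX1_1_1, zX1_2_0, zX1_2_1, zX1_2_2, zX1_3_0, zX1_3_1, zX1_3_2, zX1_3_3, zX1_4_0, zX1_4_1, zX1_4_2, zX1_4_3, zX1_4_4, zX4_0_0, zX4_1_0, zX4_1_1, zX4_2_0, zX4_2_1, zX4_2_2, zX4_3_0, zX4_3_1, zX4_3_2, zX4_3_3, zX4_4_0, zX4_4_1, zX4_4_2, zX4_4_3, zX4_4_4, zero_mul, mul_zero, add_zero, zero_add, sub_zero, zero_sub, neg_zero, neg_neg] at h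
    linear_combination h
  have E4E : X2 0 1 * X4 1 2 - X2 1 2 * X4 0 1 = 0 := by
    have h := congrFun (congrFun hc2 (0:Fin 5)) (2:Fin 5)
    simp only [Matrix.sub_apply, Matrix.mul_apply, Matrix.zero_apply, Fin.sum_univ_five, zX2_0_0, zX2_1_0, zX2_1_1, zX2_2_0, zX2_2_1, zX2_2_2, zX2_3_0, zX2_3_1, zX2_3_2, zX2_3_3, zX2_4_0, zX2_4_1, zX2_4_2, zX2_4_3, zX2_4_4, zX4_0_0, zX4_1_0, zX4_1_1, zX4_2_0, zX4_2_1, zX4_2_2, zX4_3_0, zX4_3_1, zX4_3_2, zX4_3_3, zX4_4_0, zX4_4_1, zX4_4_2, zX4_4_3, zX4_4_4, zero_mul, mul_zero, add_zero, zero_add, sub_zero, zero_sub, neg_zero, neg_neg] at h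
    linear_combination h
  have E5E : X2 1 2 * X4 2 3 - X2 2 3 * X4 1 2 = 0 := by
    have h := congrFun (congrFun hc2 (1:Fin 5)) (3:Fin 5)
    simp only [Matrix.sub_apply, Matrix.mul_apply, Matrix.zero_apply, Fin.sum_univ_five, zX2_0_0, zX2_1_0, zX2_1_1, zX2_2_0, zX2_2_1, zX2_2_2, zX2_3_0, zX2_3_1, zX2_3_2, zX2_3_3, zX2_4_0, zX2_4_1, zX2_4_2, zX2_4_3, zX2_4_4, zX4_0_0, zX4_1_0, zX4_1_1, zX4_2_0, zX4_2_1, zX4_2_2, zX4_3_0, zX4_3_1, zX4_3_2, zX4_3_3, zX4_4_0, zX4_4_1, zX4_4_2, zX4_4_3, zX4_4_4, zero_mul, mul_zero, add_zero, zero_add, sub_zero, zero_sub, neg_zero, neg_neg] at h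
    linear_combination h
  have E6E : X2 2 3 * X4 3 4 - X2 3 4 * X4 2 3 = 0 := by
    have h := congrFun (congrFun hc2 (2:Fin 5)) (4:Fin 5)
    simp only [Matrix.sub_apply, Matrix.mul_apply, Matrix.zero_apply, Fin.sum_univ_five, zX2_0_0, zX2_1_0, zX2_1_1, zX2_2_0, zX2_2_1, zX2_2_2, zX2_3_0, zX2_3_1, zX2_3_2, zX2_3_3, zX2_4_0, zX2_4_1, zX2_4_2, zX2_4_3, zX2_4_4, zX4_0_0, zX4_1_0, zX4_1_1, zX4_2_0, zX4_2_1, zX4_2_2, zX4_3_0, zX4_3_1, zX4_3_2, zX4_3_3, zX4_4_0, zX4_4_1, zX4_4_2, zX4_4_3, zX4_4_4, zero_mul, mul_zero, add_zero, zero_add, sub_zero, zero_sub, neg_zero, neg_neg] at h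
    linear_combination h
  have W3E : X2 0 1 * X4 1 3 + X2 0 2 * X4 2 3 - X4 0 1 * X2 1 3 - X4 0 2 * X2 2 3 = 0 := by
    have h := congrFun (congrFun hc2 (0:Fin 5)) (3:Fin 5)
    simp only [Matrix.sub_apply, Matrix.mul_apply, Matrix.zero_apply, Fin.sum_univ_five, zX2_0_0, zX2_1_0, zX2_1_1, zX2_2_0, zX2_2_1, zX2_2_2, zX2_3_0, zX2_3_1, zX2_3_2, zX2_3_3, zX2_4_0, zX2_4_1, zX2_4_2, zX2_4_3, zX2_4_4, zX4_0_0, zX4_1_0, zX4_1_1, zX4_2_0, zX4_2_1, zX4_2_2, zX4_3_0, zX4_3_1, zX4_3_2, zX4_3_3, zX4_4_0, zX4_4_1, zX4_4_2, zX4_4_3, zX4_4_4, zero_mul, mul_zero, add_zero, zero_add, sub_zero, zero_sub, neg_zero, neg_neg] at h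
    linear_combination h
  have W4E : X2 1 2 * X4 2 4 + X2 1 3 * X4 3 4 - X4 1 2 * X2 2 4 - X4 1 3 * X2 3 4 = 0 := by
    have h := congrFun (congrFun hc2 (1:Fin 5)) (4:Fin 5)
    simp only [Matrix.sub_apply, Matrix.mul_apply, Matrix.zero_apply, Fin.sum_univ_five, zX2_0_0, zX2_1_0, zX2_1_1, zX2_2_0, zX2_2_1, zX2_2_2, zX2_3_0, zX2_3_1, zX2_3_2, zX2_3_3, zX2_4_0, zX2_4_1, zX2_4_2, zX2_4_3, zX2_4_4, zX4_0_0, zX4_1_0, zX4_1_1, zX4_2_0, zX4_2_1, zX4_2_2, zX4_3_0, zX4_3_1, zX4_3_2, zX4_3_3, zX4_4_0, zX4_4_1, zX4_4_2, zX4_4_3, zX4_4_4, zero_mul, mul_zero, add_zero, zero_add, sub_zero, zero_sub, neg_zero, neg_neg] at h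
    linear_combination h
  have G2E : X2 0 1 * X4 1 4 + X2 0 2 * X4 2 4 + X2 0 3 * X4 3 4 - X4 0 1 * X2 1 4 - X4 0 2 * X2 2 4 - X4 0 3 * X2 3 4 = 0 := by
    have h := congrFun (congrFun hc2 (0:Fin 5)) (4:Fin 5)
    simp only [Matrix.sub_apply, Matrix.mul_apply, Matrix.zero_apply, Fin.sum_univ_five, zX2_0_0, zX2_1_0, zX2_1_1, zX2_2_0, zX2_2_1, zX2_2_2, zX2_3_0, zX2_3_1, zX2_3_2, zX2_3_3, zX2_4_0, zX2_4_1, zX2_4_2, zX2_4_3, zX2_4_4, zX4_0_0, zX4_1_0, zX4_1_1, zX4_2_0, zX4_2_1, zX4_2_2, zX4_3_0, zX4_3_1, zX4_3_2, zX4_3_3, zX4_4_0, zX4_4_1, zX4_4_2, zX4_4_3, zX4_4_4, zero_mul, mul_zero, add_zero, zero_add, sub_zero, zero_sub, neg_zero, neg_neg] at h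
    linear_combination h
  have E7E : X3 0 2 * X4 2 3 - X3 1 3 * X4 0 1 = 0 := by
    have h := congrFun (congrFun hc3 (0:Fin 5)) (3:Fin 5)
    simp only [Matrix.sub_apply, Matrix.mul_apply, Matrix.zero_apply, Fin.sum_univ_five, zX3_0_0, zX3_1_0, zX3_1_1, zX3_2_0, zX3_2_1, zX3_2_2, zX3_3_0, zX3_3_1, zX3_3_2, zX3_3_3, zX3_4_0, zX3_4_1, zX3_4_2, zX3_4_3, zX3_4_4, zX4_0_0, zX4_1_0, zX4_1_1, zX4_2_0, zX4_2_1, zX4_2_2, zX4_3_0, zX4_3_1, zX4_3_2, zX4_3_3, zX4_4_0, zX4_4_1, zX4_4_2, zX4_4_3, zX4_4_4, zsX3_0_1, zsX3_1_2, zsX3_2_3, zsX3_3_4, zero_mul, mul_zero, add_zero, zero_add, sub_zero, zero_sub, neg_zero, neg_neg] at h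
    linear_combination h
  have E8E : X3 1 3 * X4 3 4 - X3 2 4 * X4 1 2 = 0 := by
    have h := congrFun (congrFun hc3 (1:Fin 5)) (4:Fin 5)
    simp only [Matrix.sub_apply, Matrix.mul_apply, Matrix.zero_apply, Fin.sum_univ_five, zX3_0_0, zX3_1_0, zX3_1_1, zX3_2_0, zX3_2_1, zX3_2_2, zX3_3_0, zX3_3_1, zX3_3_2, zX3_3_3, zX3_4_0, zX3_4_1, zX3_4_2, zX3_4_3, zX3_4_4, zX4_0_0, zX4_1_0, zX4_1_1, zX4_2_0, zX4_2_1, zX4_2_2, zX4_3_0, zX4_3_1, zX4_3_2, zX4_3_3, zX4_4_0, zX4_4_1, zX4_4_2, zX4_4_3, zX4_4_4, zsX3_0_1, zsX3_1_2, zsX3_2_3, zsX3_3_4, zero_mul, mul_zero, add_zero, zero_add, sub_zero, zero_sub, neg_zero, neg_neg] at h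
    linear_combination h
  have V5E : X3 0 2 * X4 2 4 + X3 0 3 * X4 3 4 - X4 0 1 * X3 1 4 - X4 0 2 * X3 2 4 = 0 := by
    have h := congrFun (congrFun hc3 (0:Fin 5)) (4:Fin 5)
    simp only [Matrix.sub_apply, Matrix.mul_apply, Matrix.zero_apply, Fin.sum_univ_five, zX3_0_0, zX3_1_0, zX3_1_1, zX3_2_0, zX3_2_1, zX3_2_2, zX3_3_0, zX3_3_1, zX3_3_2, zX3_3_3, zX3_4_0, zX3_4_1, zX3_4_2, zX3_4_3, zX3_4_4, zX4_0_0, zX4_1_0, zX4_1_1, zX4_2_0, zX4_2_1, zX4_2_2, zX4_3_0, zX4_3_1, zX4_3_2, zX4_3_3, zX4_4_0, zX4_4_1, zX4_4_2, zX4_4_3, zX4_4_4, zsX3_0_1, zsX3_1_2, zsX3_2_3, zsX3_3_4, zero_mul, mul_zero, add_zero, zero_add, sub_zero, zero_sub, neg_zero, neg_neg] at h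
    linear_combination h

  have hindE : ∀ α β : k, α * Z1 0 3 + β * Z2 0 3 = 0 → α * Z1 1 4 + β * Z2 1 4 = 0 →
      α * Z1 0 4 + β * Z2 0 4 = 0 → α = 0 ∧ β = 0 := by
    intro α β hA hB hC
    have hmat : α • Z1 + β • Z2 = 0 := by
      ext i j
      fin_cases i <;> fin_cases j <;>
        simp only [Matrix.add_apply, Matrix.smul_apply, Matrix.zero_apply, smul_eq_mul,
          Fin.mk_zero, Fin.mk_one,
          show ((⟨2, by omega⟩ : Fin 5)) = (2 : Fin 5) from rfl,
          show ((⟨3, by omega⟩ : Fin 5)) = (3 : Fin 5) from rfl,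
          show ((⟨4, by omega⟩ : Fin 5)) = (4 : Fin 5) from rfl] <;>
        first
          | exact hA
          | exact hB
          | exact hC
          | (simp only [zZ1_0_0, zZ1_1_0, zZ1_1_1, zZ1_2_0, zZ1_2_1, zZ1_2_2, zZ1_3_0,
              zZ1_3_1, zZ1_3_2, zZ1_3_3, zZ1_4_0, zZ1_4_1, zZ1_4_2, zZ1_4_3, zZ1_4_4,
              zZ2_0_0, zZ2_1_0, zZ2_1_1, zZ2_2_0, zZ2_2_1, zZ2_2_2, zZ2_3_0, zZ2_3_1,
              zZ2_3_2, zZ2_3_3, zZ2_4_0, zZ2_4_1, zZ2_4_2, zZ2_4_3, zZ2_4_4,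
              zsZ1_0_1, zsZ1_1_2, zsZ1_2_3, zsZ1_3_4, zsZ1_0_2, zsZ1_1_3, zsZ1_2_4,
              zsZ2_0_1, zsZ2_1_2, zsZ2_2_3, zsZ2_3_4, zsZ2_0_2, zsZ2_1_3, zsZ2_2_4,
              mul_zero, add_zero])
    have hsum : ∑ i : Fin 5, (![0, 0, 0, α, β] : Fin 5 → k) i • ![X1, X2, X3, Z1, Z2] i
        = 0 := by
      simp only [Fin.sum_univ_five, Matrix.cons_val_zero, Matrix.cons_val_one,
        Matrix.head_cons, Matrix.cons_val_two, Matrix.tail_cons, Matrix.cons_val_three,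
        Matrix.cons_val_four, zero_smul, zero_add]
      exact hmat
    have hcoef := Fintype.linearIndependent_iff.mp hli ![0, 0, 0, α, β] hsum
    refine ⟨?_, ?_⟩
    · have := hcoef 3
      simpa using this
    · have := hcoef 4
      simpa using this
  obtain ⟨hy1, hy2, hy3, hy4, hw1, hw2, hw3, α, β, hu1, hu2, hv⟩ :=
    engineMaster (X4 0 4) hc1E hc2E hc3E hp1E hp2E hq1E hq2E hz1E hz2E
      caE caqE cbE cbqE E1E E2E E3E E4E E5E E6E E7E E8E W1E W2E W3E W4E G1E G2E V5E hindE
  have hrep : X4 = α • Z1 + β • Z2 := by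
    ext i j
    fin_cases i <;> fin_cases j <;>
      simp only [Matrix.add_apply, Matrix.smul_apply, smul_eq_mul,
        Fin.mk_zero, Fin.mk_one,
        show ((⟨2, by omega⟩ : Fin 5)) = (2 : Fin 5) from rfl,
        show ((⟨3, by omega⟩ : Fin 5)) = (3 : Fin 5) from rfl,
        show ((⟨4, by omega⟩ : Fin 5)) = (4 : Fin 5) from rfl] <;>
      first
        | exact hu1
        | exact hu2
        | exact hv
        | (simp only [zX4_0_0, zX4_1_0, zX4_1_1, zX4_2_0, zX4_2_1, zX4_2_2, zX4_3_0,
            zX4_3_1, zX4_3_2, zX4_3_3, zX4_4_0, zX4_4_1, zX4_4_2, zX4_4_3, zX4_4_4,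
            hy1, hy2, hy3, hy4, hw1, hw2, hw3,
            zZ1_0_0, zZ1_1_0, zZ1_1_1, zZ1_2_0, zZ1_2_1, zZ1_2_2, zZ1_3_0,
            zZ1_3_1, zZ1_3_2, zZ1_3_3, zZ1_4_0, zZ1_4_1, zZ1_4_2, zZ1_4_3, zZ1_4_4,
            zZ2_0_0, zZ2_1_0, zZ2_1_1, zZ2_2_0, zZ2_2_1, zZ2_2_2, zZ2_3_0, zZ2_3_1,
            zZ2_3_2, zZ2_3_3, zZ2_4_0, zZ2_4_1, zZ2_4_2, zZ2_4_3, zZ2_4_4,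
            zsZ1_0_1, zsZ1_1_2, zsZ1_2_3, zsZ1_3_4, zsZ1_0_2, zsZ1_1_3, zsZ1_2_4,
            zsZ2_0_1, zsZ2_1_2, zsZ2_2_3, zsZ2_3_4, zsZ2_0_2, zsZ2_1_3, zsZ2_2_4,
            mul_zero, add_zero])
  rw [hrep]
  have hmem1 : Z1 ∈ ({X1, X2, X3, Z1, Z2} : Set (Matrix (Fin 5) (Fin 5) k)) := by
    simp
  have hmem2 : Z2 ∈ ({X1, X2, X3, Z1, Z2} : Set (Matrix (Fin 5) (Fin 5) k)) := by
    simp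
  exact Submodule.add_mem _
    (Submodule.smul_mem _ α (Submodule.subset_span hmem1))
    (Submodule.smul_mem _ β (Submodule.subset_span hmem2))
end

section
/- Let ε ∈ k and let X1, X2, X3, Z1, Z2 be linearly independent elements of n_5(k) satisfying [X1,X2] = X3, [X1,X3] = Z1, [X2,X3] = Z2, and [Xi, Zj] = 0 for all i ∈ {1,2,3} and j ∈ {1,2}. Suppose X4 ∈ n_5(k) is such that {X1, X2, X3, X4, Z1, Z2} is linearly independent and [X1, X4] = ε·Z2, [X2, X4] = Z1, [X3, X4] = 0, and [Zj, X4] = 0 for j = 1, 2. Then there exists a ∈ k with a² = ε. -/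
attribute [local instance 100] LieRing.ofAssociativeRing

section lieHelpers
variable {k : Type*} [Field k]

private def SU (A : Matrix (Fin 5) (Fin 5) k) : Prop := ∀ i j : Fin 5, j ≤ i → A i j = 0

private lemma lie01 (A B : Matrix (Fin 5) (Fin 5) k) (hA : SU A) (hB : SU B) :
    ⁅A, B⁆ 0 1 = 0 := by
  rw [Ring.lie_def, Matrix.sub_apply, Matrix.mul_apply, Matrix.mul_apply,
    Fin.sum_univ_five, Fin.sum_univ_five, hA 0 0 (by decide), hB 1 1 (by decide),
    hB 2 1 (by decide), hB 3 1 (by decide), hB 4 1 (by decide), hB 0 0 (by decide),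
    hA 1 1 (by decide), hA 2 1 (by decide), hA 3 1 (by decide), hA 4 1 (by decide)]
  ring

private lemma lie12 (A B : Matrix (Fin 5) (Fin 5) k) (hA : SU A) (hB : SU B) :
    ⁅A, B⁆ 1 2 = 0 := by
  rw [Ring.lie_def, Matrix.sub_apply, Matrix.mul_apply, Matrix.mul_apply,
    Fin.sum_univ_five, Fin.sum_univ_five, hA 1 0 (by decide), hA 1 1 (by decide),
    hB 2 2 (by decide), hB 3 2 (by decide), hB 4 2 (by decide),
    hB 1 0 (by decide), hB 1 1 (by decide),
    hA 2 2 (by decide), hA 3 2 (by decide), hA 4 2 (by decide)]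
  ring

private lemma lie23 (A B : Matrix (Fin 5) (Fin 5) k) (hA : SU A) (hB : SU B) :
    ⁅A, B⁆ 2 3 = 0 := by
  rw [Ring.lie_def, Matrix.sub_apply, Matrix.mul_apply, Matrix.mul_apply,
    Fin.sum_univ_five, Fin.sum_univ_five, hA 2 0 (by decide), hA 2 1 (by decide),
    hA 2 2 (by decide), hB 3 3 (by decide), hB 4 3 (by decide),
    hB 2 0 (by decide), hB 2 1 (by decide), hB 2 2 (by decide),
    hA 3 3 (by decide), hA 4 3 (by decide)]
  ring

private lemma lie34 (A B : Matrix (Fin 5) (Fin 5) k) (hA : SU A) (hB : SU B) :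
    ⁅A, B⁆ 3 4 = 0 := by
  rw [Ring.lie_def, Matrix.sub_apply, Matrix.mul_apply, Matrix.mul_apply,
    Fin.sum_univ_five, Fin.sum_univ_five, hA 3 0 (by decide), hA 3 1 (by decide),
    hA 3 2 (by decide), hA 3 3 (by decide), hB 4 4 (by decide),
    hB 3 0 (by decide), hB 3 1 (by decide), hB 3 2 (by decide), hB 3 3 (by decide),
    hA 4 4 (by decide)]
  ring

private lemma lie02 (A B : Matrix (Fin 5) (Fin 5) k) (hA : SU A) (hB : SU B) :
    ⁅A, B⁆ 0 2 = A 0 1 * B 1 2 - B 0 1 * A 1 2 := by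
  rw [Ring.lie_def, Matrix.sub_apply, Matrix.mul_apply, Matrix.mul_apply,
    Fin.sum_univ_five, Fin.sum_univ_five, hA 0 0 (by decide),
    hB 2 2 (by decide), hB 3 2 (by decide), hB 4 2 (by decide),
    hB 0 0 (by decide), hA 2 2 (by decide), hA 3 2 (by decide), hA 4 2 (by decide)]
  ring

private lemma lie13 (A B : Matrix (Fin 5) (Fin 5) k) (hA : SU A) (hB : SU B) :
    ⁅A, B⁆ 1 3 = A 1 2 * B 2 3 - B 1 2 * A 2 3 := by
  rw [Ring.lie_def, Matrix.sub_apply, Matrix.mul_apply, Matrix.mul_apply,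
    Fin.sum_univ_five, Fin.sum_univ_five, hA 1 0 (by decide), hA 1 1 (by decide),
    hB 3 3 (by decide), hB 4 3 (by decide),
    hB 1 0 (by decide), hB 1 1 (by decide),
    hA 3 3 (by decide), hA 4 3 (by decide)]
  ring

private lemma lie24 (A B : Matrix (Fin 5) (Fin 5) k) (hA : SU A) (hB : SU B) :
    ⁅A, B⁆ 2 4 = A 2 3 * B 3 4 - B 2 3 * A 3 4 := by
  rw [Ring.lie_def, Matrix.sub_apply, Matrix.mul_apply, Matrix.mul_apply,
    Fin.sum_univ_five, Fin.sum_univ_five, hA 2 0 (by decide), hA 2 1 (by decide),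
    hA 2 2 (by decide), hB 4 4 (by decide),
    hB 2 0 (by decide), hB 2 1 (by decide), hB 2 2 (by decide),
    hA 4 4 (by decide)]
  ring

private lemma lie03 (A B : Matrix (Fin 5) (Fin 5) k) (hA : SU A) (hB : SU B) :
    ⁅A, B⁆ 0 3 = A 0 1 * B 1 3 + A 0 2 * B 2 3 - B 0 1 * A 1 3 - B 0 2 * A 2 3 := by
  rw [Ring.lie_def, Matrix.sub_apply, Matrix.mul_apply, Matrix.mul_apply,
    Fin.sum_univ_five, Fin.sum_univ_five, hA 0 0 (by decide),
    hB 3 3 (by decide), hB 4 3 (by decide),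
    hB 0 0 (by decide), hA 3 3 (by decide), hA 4 3 (by decide)]
  ring

private lemma lie14 (A B : Matrix (Fin 5) (Fin 5) k) (hA : SU A) (hB : SU B) :
    ⁅A, B⁆ 1 4 = A 1 2 * B 2 4 + A 1 3 * B 3 4 - B 1 2 * A 2 4 - B 1 3 * A 3 4 := by
  rw [Ring.lie_def, Matrix.sub_apply, Matrix.mul_apply, Matrix.mul_apply,
    Fin.sum_univ_five, Fin.sum_univ_five, hA 1 0 (by decide), hA 1 1 (by decide),
    hB 4 4 (by decide),
    hB 1 0 (by decide), hB 1 1 (by decide), hA 4 4 (by decide)]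
  ring

private lemma lie04 (A B : Matrix (Fin 5) (Fin 5) k) (hA : SU A) (hB : SU B) :
    ⁅A, B⁆ 0 4 = A 0 1 * B 1 4 + A 0 2 * B 2 4 + A 0 3 * B 3 4
      - B 0 1 * A 1 4 - B 0 2 * A 2 4 - B 0 3 * A 3 4 := by
  rw [Ring.lie_def, Matrix.sub_apply, Matrix.mul_apply, Matrix.mul_apply,
    Fin.sum_univ_five, Fin.sum_univ_five, hA 0 0 (by decide), hB 4 4 (by decide),
    hB 0 0 (by decide), hA 4 4 (by decide)]
  ring

end lieHelpers


private lemma lemA {k : Type*} [Field k] [CharZero k]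
    (ε x1 x2 x3 y1 y2 y3 d1 d2 d3 E1 E2 E3 F1 F2 F3 G1 G2 G3 t4b t1b t2b
      p q u1 v1 z1 z2 m2 : k)
    (hp : p = x1*y2 - x2*y1)
    (hq : q = x2*y3 - x3*y2)
    (hm2 : m2 = x2*G3 - y2*F3)
    (hu1 : u1 = x1*q - x3*p)
    (hv1 : v1 = y1*q - y3*p)
    (hz1 : z1 = x1*m2 - p*F3)
    (hz2 : z2 = y1*m2 - p*G3)
    (hK1 : x1*d2 = x2*d1) (hK2 : x2*d3 = x3*d2)
    (hL1 : y1*d2 = y2*d1) (hL2 : y2*d3 = y3*d2)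
    (hM1 : d1*q = d3*p)
    (hR4a : x1*E2 - x3*E1 - d1*F2 + d3*F1 = ε*v1)
    (hR4b : x2*E3 - d2*F3 = 0)
    (hR5a : y1*E2 - y3*E1 - d1*G2 + d3*G1 = u1)
    (hR5b : y2*E3 - d2*G3 = 0)
    (hR8 : x1*t4b + F1*E3 - F3*E1 - d1*t1b = ε*z2)
    (hR9 : y1*t4b + G1*E3 - G3*E1 - d1*t2b = z1)
    (hne : ¬(u1 = 0 ∧ v1 = 0))
    (hIND : ∀ l m : k, l*u1 + m*v1 = 0 → l*z1 + m*z2 = 0 → l = 0 ∧ m = 0) :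
    ∃ a : k, a ^ 2 = ε := by
  subst hp hq hm2 hu1 hv1 hz1 hz2
  -- step 1 : d1 = 0
  have hd1 : d1 = 0 := by
    by_contra hd1
    have h1 : (x1*y2 - x2*y1)*d1 = 0 := by linear_combination y1*hK1 - x1*hL1
    have hp0 : x1*y2 - x2*y1 = 0 := (mul_eq_zero.mp h1).resolve_right hd1
    have h2 : (x2*y3 - x3*y2)*d1 = 0 := by linear_combination hM1 + d3*hp0
    have hq0 : x2*y3 - x3*y2 = 0 := (mul_eq_zero.mp h2).resolve_right hd1
    exact hne ⟨by linear_combination x1*hq0 - x3*hp0, by linear_combination y1*hq0 - y3*hp0⟩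
  subst hd1
  -- step 2 : d2 = 0
  have hd2 : d2 = 0 := by
    by_contra hd2
    have hx1 : x1 = 0 := by
      have h : x1*d2 = 0 := by linear_combination hK1
      exact (mul_eq_zero.mp h).resolve_right hd2
    have hy1 : y1 = 0 := by
      have h : y1*d2 = 0 := by linear_combination hL1
      exact (mul_eq_zero.mp h).resolve_right hd2
    have hp0 : x1*y2 - x2*y1 = 0 := by linear_combination y2*hx1 - x2*hy1
    exact hne ⟨by linear_combination (x2*y3-x3*y2)*hx1 - x3*hp0,
      by linear_combination (x2*y3-x3*y2)*hy1 - y3*hp0⟩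
  subst hd2
  -- step 3 : d3 = 0
  have hd3 : d3 = 0 := by
    by_contra hd3
    have hx2 : x2 = 0 := by
      have h : x2*d3 = 0 := by linear_combination hK2
      exact (mul_eq_zero.mp h).resolve_right hd3
    have hy2 : y2 = 0 := by
      have h : y2*d3 = 0 := by linear_combination hL2
      exact (mul_eq_zero.mp h).resolve_right hd3
    exact hne ⟨by linear_combination (x1*y3 + x3*y1)*hx2 - 2*x1*x3*hy2,
      by linear_combination 2*y1*y3*hx2 - (x3*y1 + x1*y3)*hy2⟩
  subst hd3
  -- step 4 : E3 = 0
  have hE3 : E3 = 0 := by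
    by_contra hE3
    have hx2 : x2 = 0 := by
      have h : x2*E3 = 0 := by linear_combination hR4b
      exact (mul_eq_zero.mp h).resolve_right hE3
    have hy2 : y2 = 0 := by
      have h : y2*E3 = 0 := by linear_combination hR5b
      exact (mul_eq_zero.mp h).resolve_right hE3
    exact hne ⟨by linear_combination (x1*y3 + x3*y1)*hx2 - 2*x1*x3*hy2,
      by linear_combination 2*y1*y3*hx2 - (x3*y1 + x1*y3)*hy2⟩
  subst hE3
  -- step 5 : p ≠ 0
  have hpne : x1*y2 - x2*y1 ≠ 0 := by
    intro hp0
    have hqne : x2*y3 - x3*y2 ≠ 0 := by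
      intro hq0
      exact hne ⟨by linear_combination x1*hq0 - x3*hp0, by linear_combination y1*hq0 - y3*hp0⟩
    obtain ⟨hv0, hu0⟩ := hIND (y1*(x2*y3 - x3*y2) - y3*(x1*y2 - x2*y1))
      (-(x1*(x2*y3 - x3*y2) - x3*(x1*y2 - x2*y1)))
      (by ring)
      (by linear_combination (-2*(x1*y2 - x2*y1)*(x3*G3 - y3*F3))*hp0)
    exact hne ⟨by linear_combination -hu0, hv0⟩
  -- step 6 : x3*G3 - y3*F3 ≠ 0
  have hWne : x3*G3 - y3*F3 ≠ 0 := by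
    intro hW0
    obtain ⟨hv0, hu0⟩ := hIND (y1*(x2*y3 - x3*y2) - y3*(x1*y2 - x2*y1))
      (-(x1*(x2*y3 - x3*y2) - x3*(x1*y2 - x2*y1)))
      (by ring)
      (by linear_combination (-2*(x1*y2 - x2*y1)^2)*hW0)
    exact hne ⟨by linear_combination -hu0, hv0⟩
  -- step 7/8 : the two linear identities in a, b
  have h1 : E1*(x1*y3 - x3*y1)
      = ε*(y1*(x2*y3-x3*y2) - y3*(x1*y2-x2*y1))*y1
        - (x1*(x2*y3-x3*y2) - x3*(x1*y2-x2*y1))*x1 := by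
    linear_combination y1*hR4a - x1*hR5a
  have hG : (E1*x1 - x2*(ε*y1^2 - x1^2) + ε*(x1*y2-x2*y1)*y1)*G3
      + (-(E1*y1) + y2*(ε*y1^2-x1^2) - (x1*y2-x2*y1)*x1)*F3 = 0 := by
    linear_combination y1*hR8 - x1*hR9
  have hab : y3*(E1*x1 - x2*(ε*y1^2 - x1^2) + ε*(x1*y2-x2*y1)*y1)
      + x3*(-(E1*y1) + y2*(ε*y1^2-x1^2) - (x1*y2-x2*y1)*x1) = 0 := by
    linear_combination h1
  have ha : E1*x1 - x2*(ε*y1^2 - x1^2) + ε*(x1*y2-x2*y1)*y1 = 0 := by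
    have h9 : (E1*x1 - x2*(ε*y1^2 - x1^2) + ε*(x1*y2-x2*y1)*y1)*(y3*F3 - x3*G3) = 0 := by
      linear_combination F3*hab - x3*hG
    refine (mul_eq_zero.mp h9).resolve_right ?_
    intro h; exact hWne (by linear_combination -h)
  have hb : -(E1*y1) + y2*(ε*y1^2-x1^2) - (x1*y2-x2*y1)*x1 = 0 := by
    have h9 : (-(E1*y1) + y2*(ε*y1^2-x1^2) - (x1*y2-x2*y1)*x1)*(x3*G3 - y3*F3) = 0 := by
      linear_combination G3*hab - y3*hG
    exact (mul_eq_zero.mp h9).resolve_right hWne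
  have hkey : ε*y1^2 - x1^2 = 0 := by
    have h10 : (2*(x1*y2 - x2*y1))*(ε*y1^2 - x1^2) = 0 := by
      linear_combination y1*ha + x1*hb
    rcases mul_eq_zero.mp h10 with h | h
    · rcases mul_eq_zero.mp h with h2 | h2
      · exact absurd h2 two_ne_zero
      · exact absurd h2 hpne
    · exact h
  by_cases hy1 : y1 = 0
  · exfalso
    have hx1 : x1 = 0 := by
      have h : x1^2 = 0 := by linear_combination -hkey + ε*y1*hy1
      exact pow_eq_zero_iff (two_ne_zero) |>.mp h
    exact hpne (by linear_combination y2*hx1 - x2*hy1)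
  · refine ⟨x1/y1, ?_⟩
    field_simp
    linear_combination -hkey


private lemma lemC {k : Type*} [Field k] [CharZero k]
    (ε n1 n2 s t w x2 x3 y2 y3 d2 d3 E1 E2 E3 F1 F2 F3 G1 G2 G3 sg tu p q r : k)
    (hn1 : n1 ≠ 0) (hn2 : n2 ≠ 0)
    (hp : p = (s*n1)*y2 - x2*(t*n1))
    (hq : q = x2*y3 - x3*y2)
    (hr : r = x3*(t*n2) - (s*n2)*y3)
    (hu1 : sg*n1 = (s*n1)*q - x3*p)
    (hu2 : sg*n2 = x2*r - (s*n2)*q)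
    (hv1 : tu*n1 = (t*n1)*q - y3*p)
    (hv2 : tu*n2 = y2*r - (t*n2)*q)
    (hK1 : (s*n1)*d2 = x2*(w*n1)) (hK2 : x2*d3 = x3*d2) (hK3 : x3*(w*n2) = (s*n2)*d3)
    (hL1 : (t*n1)*d2 = y2*(w*n1)) (hL2 : y2*d3 = y3*d2) (hL3 : y3*(w*n2) = (t*n2)*d3)
    (hR4a : (s*n1)*E2 - x3*E1 - (w*n1)*F2 + d3*F1 = ε*(tu*n1))
    (hR4b : x2*E3 - (s*n2)*E2 - d2*F3 + (w*n2)*F2 = ε*(tu*n2))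
    (hR5a : (t*n1)*E2 - y3*E1 - (w*n1)*G2 + d3*G1 = sg*n1)
    (hR5b : y2*E3 - (t*n2)*E2 - d2*G3 + (w*n2)*G2 = sg*n2)
    (hst : ¬(sg = 0 ∧ tu = 0)) :
    ∃ a : k, a ^ 2 = ε := by
  subst hp hq hr
  -- step 1 : w = 0
  have hw : w = 0 := by
    by_contra hw
    by_cases hd2 : d2 = 0
    · subst hd2
      have hx2 : x2 = 0 := by
        have h : x2*(w*n1) = 0 := by linear_combination -hK1
        rcases mul_eq_zero.mp h with h' | h'
        · exact h'
        · exact absurd h' (mul_ne_zero hw hn1)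
      have hy2 : y2 = 0 := by
        have h : y2*(w*n1) = 0 := by linear_combination -hL1
        rcases mul_eq_zero.mp h with h' | h'
        · exact h'
        · exact absurd h' (mul_ne_zero hw hn1)
      refine hst ⟨?_, ?_⟩
      · have h : sg*n1 = 0 := by
          linear_combination hu1 + (s*n1*y3 + x3*t*n1)*hx2 - (s*n1*x3 + x3*s*n1)*hy2
        exact (mul_eq_zero.mp h).resolve_right hn1
      · have h : tu*n1 = 0 := by
          linear_combination hv1 + (t*n1*y3 + y3*t*n1)*hx2 - (t*n1*x3 + y3*s*n1)*hy2
        exact (mul_eq_zero.mp h).resolve_right hn1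
    · by_cases hd3 : d3 = 0
      · subst hd3
        have hx3 : x3 = 0 := by
          have h : x3*d2 = 0 := by linear_combination -hK2
          exact (mul_eq_zero.mp h).resolve_right hd2
        have hy3 : y3 = 0 := by
          have h : y3*d2 = 0 := by linear_combination -hL2
          exact (mul_eq_zero.mp h).resolve_right hd2
        refine hst ⟨?_, ?_⟩
        · have h : sg*n2 = 0 := by
            linear_combination hu2 + (x2*t*n2 + s*n2*y2)*hx3 - 2*s*n2*x2*hy3
          exact (mul_eq_zero.mp h).resolve_right hn2
        · have h : tu*n2 = 0 := by
            linear_combination hv2 + 2*t*n2*y2*hx3 - (y2*s*n2 + t*n2*x2)*hy3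
          exact (mul_eq_zero.mp h).resolve_right hn2
      · -- d1 d2 d3 d4 all nonzero
        have hd1 : w*n1 ≠ 0 := mul_ne_zero hw hn1
        have hp0 : (s*n1)*y2 - x2*(t*n1) = 0 := by
          have h : ((s*n1)*y2 - x2*(t*n1))*(w*n1) = 0 := by
            linear_combination (t*n1)*hK1 - (s*n1)*hL1
          exact (mul_eq_zero.mp h).resolve_right hd1
        have hq0 : x2*y3 - x3*y2 = 0 := by
          have h : (x2*y3 - x3*y2)*d2 = 0 := by linear_combination y2*hK2 - x2*hL2
          exact (mul_eq_zero.mp h).resolve_right hd2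
        have hr0 : x3*(t*n2) - (s*n2)*y3 = 0 := by
          have h : (x3*(t*n2) - (s*n2)*y3)*d3 = 0 := by linear_combination y3*hK3 - x3*hL3
          exact (mul_eq_zero.mp h).resolve_right hd3
        refine hst ⟨?_, ?_⟩
        · have h : sg*n1 = 0 := by linear_combination hu1 + (s*n1)*hq0 - x3*hp0
          exact (mul_eq_zero.mp h).resolve_right hn1
        · have h : tu*n1 = 0 := by linear_combination hv1 + (t*n1)*hq0 - y3*hp0
          exact (mul_eq_zero.mp h).resolve_right hn1
  subst hw
  -- step 2 : d2 = 0
  have hd2 : d2 = 0 := by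
    by_contra hd2
    have hs : s = 0 := by
      have h : (s*n1)*d2 = 0 := by linear_combination hK1
      rcases mul_eq_zero.mp h with h' | h'
      · exact (mul_eq_zero.mp h').resolve_right hn1
      · exact absurd h' hd2
    have ht : t = 0 := by
      have h : (t*n1)*d2 = 0 := by linear_combination hL1
      rcases mul_eq_zero.mp h with h' | h'
      · exact (mul_eq_zero.mp h').resolve_right hn1
      · exact absurd h' hd2
    subst hs ht
    refine hst ⟨?_, ?_⟩
    · have h : sg*n1 = 0 := by linear_combination hu1
      exact (mul_eq_zero.mp h).resolve_right hn1
    · have h : tu*n1 = 0 := by linear_combination hv1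
      exact (mul_eq_zero.mp h).resolve_right hn1
  subst hd2
  -- step 3 : d3 = 0
  have hd3 : d3 = 0 := by
    by_contra hd3
    have hs : s = 0 := by
      have h : (s*n2)*d3 = 0 := by linear_combination -hK3
      rcases mul_eq_zero.mp h with h' | h'
      · exact (mul_eq_zero.mp h').resolve_right hn2
      · exact absurd h' hd3
    have ht : t = 0 := by
      have h : (t*n2)*d3 = 0 := by linear_combination -hL3
      rcases mul_eq_zero.mp h with h' | h'
      · exact (mul_eq_zero.mp h').resolve_right hn2
      · exact absurd h' hd3
    subst hs ht
    refine hst ⟨?_, ?_⟩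
    · have h : sg*n2 = 0 := by linear_combination hu2
      exact (mul_eq_zero.mp h).resolve_right hn2
    · have h : tu*n2 = 0 := by linear_combination hv2
      exact (mul_eq_zero.mp h).resolve_right hn2
  subst hd3
  -- step 4 : s*q = 0 and t*q = 0
  have h3 : (3:k) ≠ 0 := by norm_num
  have hsq : s*(x2*y3 - x3*y2) = 0 := by
    have h0 : (n1*n2)*(3*(s*(x2*y3 - x3*y2))) = 0 := by
      linear_combination n1*hu2 - n2*hu1
    have h1 := (mul_eq_zero.mp h0).resolve_left (mul_ne_zero hn1 hn2)
    exact (mul_eq_zero.mp h1).resolve_left h3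
  have htq : t*(x2*y3 - x3*y2) = 0 := by
    have h0 : (n1*n2)*(3*(t*(x2*y3 - x3*y2))) = 0 := by
      linear_combination n1*hv2 - n2*hv1
    have h1 := (mul_eq_zero.mp h0).resolve_left (mul_ne_zero hn1 hn2)
    exact (mul_eq_zero.mp h1).resolve_left h3
  -- step 5 : the sigma/tau formulas
  have hsA : sg = -(x3*(s*y2 - t*x2)) := by
    have h : sg*n1 = (-(x3*(s*y2 - t*x2)))*n1 := by linear_combination hu1 + n1*hsq
    exact mul_right_cancel₀ hn1 h
  have hsB : sg = x2*(t*x3 - s*y3) := by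
    have h : sg*n2 = (x2*(t*x3 - s*y3))*n2 := by linear_combination hu2 - n2*hsq
    exact mul_right_cancel₀ hn2 h
  have htA : tu = -(y3*(s*y2 - t*x2)) := by
    have h : tu*n1 = (-(y3*(s*y2 - t*x2)))*n1 := by linear_combination hv1 + n1*htq
    exact mul_right_cancel₀ hn1 h
  have htB : tu = y2*(t*x3 - s*y3) := by
    have h : tu*n2 = (y2*(t*x3 - s*y3))*n2 := by linear_combination hv2 - n2*htq
    exact mul_right_cancel₀ hn2 h
  have hAne : s*y2 - t*x2 ≠ 0 := by
    intro h
    exact hst ⟨by rw [hsA, h]; ring, by rw [htA, h]; ring⟩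
  -- step 6 : the two E2 identities
  have hI : (s*y3 - t*x3)*E2 - ε*tu*y3 + sg*x3 = 0 := by
    have h : n1*((s*y3 - t*x3)*E2 - ε*tu*y3 + sg*x3) = 0 := by
      linear_combination y3*hR4a - x3*hR5a
    exact (mul_eq_zero.mp h).resolve_left hn1
  have hII : (s*y2 - t*x2)*E2 - x2*sg + ε*y2*tu = 0 := by
    have h : n2*((s*y2 - t*x2)*E2 - x2*sg + ε*y2*tu) = 0 := by
      linear_combination x2*hR5b - y2*hR4b
    exact (mul_eq_zero.mp h).resolve_left hn2
  have eE2 : E2 = ε*y2*y3 - x2*x3 := by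
    have h : (s*y2 - t*x2)*E2 = (s*y2 - t*x2)*(ε*y2*y3 - x2*x3) := by
      linear_combination hII + x2*hsA - ε*y2*htA
    exact mul_left_cancel₀ hAne h
  have hfin : x3^2 - ε*y3^2 = 0 := by
    have h : (2*(s*y2 - t*x2))*(x3^2 - ε*y3^2) = 0 := by
      linear_combination -hI - (t*x3 - s*y3)*eE2 + ε*y3*htB - x3*hsB - 2*ε*y3*htA + 2*x3*hsA
    rcases mul_eq_zero.mp h with h' | h'
    · rcases mul_eq_zero.mp h' with h2 | h2
      · exact absurd h2 two_ne_zero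
      · exact absurd h2 hAne
    · exact h'
  have hy3 : y3 ≠ 0 := by
    intro hy3
    have hx3 : x3 = 0 := by
      have h : x3^2 = 0 := by linear_combination hfin + ε*y3*hy3
      exact pow_eq_zero_iff two_ne_zero |>.mp h
    exact hst ⟨by rw [hsA, hx3]; ring, by rw [htA, hy3]; ring⟩
  refine ⟨x3/y3, ?_⟩
  field_simp
  linear_combination hfin

/-- If `X1, X2, X3, Z1, Z2 ∈ n_5(k)` satisfy the `L_{5,9}` relations and `X4 ∈ n_5(k)` makes
`{X1, X2, X3, X4, Z1, Z2}` linearly independent with `[X1,X4] = ε • Z2`, `[X2,X4] = Z1`,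
`[X3,X4] = 0`, `[Zj,X4] = 0`, then `ε` is a square in `k`. -/
theorem exists_sq_eq_of_L624_relations
    (k : Type*) [Field k] [CharZero k] (ε : k)
    (X1 X2 X3 Z1 Z2 X4 : Matrix (Fin 5) (Fin 5) k)
    (hX1 : X1 ∈ strictUpper k 5) (hX2 : X2 ∈ strictUpper k 5) (hX3 : X3 ∈ strictUpper k 5)
    (hZ1 : Z1 ∈ strictUpper k 5) (hZ2 : Z2 ∈ strictUpper k 5) (hX4 : X4 ∈ strictUpper k 5)
    (hli5 : LinearIndependent k ![X1, X2, X3, Z1, Z2])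
    (h12 : ⁅X1, X2⁆ = X3) (h13 : ⁅X1, X3⁆ = Z1) (h23 : ⁅X2, X3⁆ = Z2)
    (h1Z1 : ⁅X1, Z1⁆ = 0) (h1Z2 : ⁅X1, Z2⁆ = 0)
    (h2Z1 : ⁅X2, Z1⁆ = 0) (h2Z2 : ⁅X2, Z2⁆ = 0)
    (h3Z1 : ⁅X3, Z1⁆ = 0) (h3Z2 : ⁅X3, Z2⁆ = 0)
    (hli6 : LinearIndependent k ![X1, X2, X3, X4, Z1, Z2])
    (h14 : ⁅X1, X4⁆ = ε • Z2) (h24 : ⁅X2, X4⁆ = Z1) (h34 : ⁅X3, X4⁆ = 0)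
    (hZ14 : ⁅Z1, X4⁆ = 0) (hZ24 : ⁅Z2, X4⁆ = 0) :
    ∃ a : k, a ^ 2 = ε := by
  classical
  have zX1 : ∀ i j : Fin 5, j ≤ i → X1 i j = 0 := hX1
  have zX2 : ∀ i j : Fin 5, j ≤ i → X2 i j = 0 := hX2
  have zX3 : ∀ i j : Fin 5, j ≤ i → X3 i j = 0 := hX3
  have zX4 : ∀ i j : Fin 5, j ≤ i → X4 i j = 0 := hX4
  have zZ1 : ∀ i j : Fin 5, j ≤ i → Z1 i j = 0 := hZ1
  have zZ2 : ∀ i j : Fin 5, j ≤ i → Z2 i j = 0 := hZ2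
  -- degree-1 entries of X3 vanish
  have c01 : X3 0 1 = 0 := by rw [← h12]; exact lie01 X1 X2 zX1 zX2
  have c12 : X3 1 2 = 0 := by rw [← h12]; exact lie12 X1 X2 zX1 zX2
  have c23 : X3 2 3 = 0 := by rw [← h12]; exact lie23 X1 X2 zX1 zX2
  have c34 : X3 3 4 = 0 := by rw [← h12]; exact lie34 X1 X2 zX1 zX2
  -- structure constants of X3
  have hpd : X3 0 2 = X1 0 1 * X2 1 2 - X2 0 1 * X1 1 2 := by
    rw [← h12]; exact lie02 X1 X2 zX1 zX2
  have hqd : X3 1 3 = X1 1 2 * X2 2 3 - X2 1 2 * X1 2 3 := by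
    rw [← h12]; exact lie13 X1 X2 zX1 zX2
  have hrd : X3 2 4 = X1 2 3 * X2 3 4 - X2 2 3 * X1 3 4 := by
    rw [← h12]; exact lie24 X1 X2 zX1 zX2
  have hm1d : X3 0 3 = X1 0 1 * X2 1 3 + X1 0 2 * X2 2 3 - X2 0 1 * X1 1 3 - X2 0 2 * X1 2 3 := by
    rw [← h12]; exact lie03 X1 X2 zX1 zX2
  have hm2d : X3 1 4 = X1 1 2 * X2 2 4 + X1 1 3 * X2 3 4 - X2 1 2 * X1 2 4 - X2 1 3 * X1 3 4 := by
    rw [← h12]; exact lie14 X1 X2 zX1 zX2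
  -- low entries of Z1 vanish
  have zZ101 : Z1 0 1 = 0 := by rw [← h13]; exact lie01 X1 X3 zX1 zX3
  have zZ112 : Z1 1 2 = 0 := by rw [← h13]; exact lie12 X1 X3 zX1 zX3
  have zZ123 : Z1 2 3 = 0 := by rw [← h13]; exact lie23 X1 X3 zX1 zX3
  have zZ134 : Z1 3 4 = 0 := by rw [← h13]; exact lie34 X1 X3 zX1 zX3
  have zZ102 : Z1 0 2 = 0 := by rw [← h13, lie02 X1 X3 zX1 zX3, c12, c01]; ring
  have zZ113 : Z1 1 3 = 0 := by rw [← h13, lie13 X1 X3 zX1 zX3, c23, c12]; ring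
  have zZ124 : Z1 2 4 = 0 := by rw [← h13, lie24 X1 X3 zX1 zX3, c34, c23]; ring
  have hu1d : Z1 0 3 = X1 0 1 * X3 1 3 - X3 0 2 * X1 2 3 := by
    rw [← h13, lie03 X1 X3 zX1 zX3, c23, c01]; ring
  have hu2d : Z1 1 4 = X1 1 2 * X3 2 4 - X3 1 3 * X1 3 4 := by
    rw [← h13, lie14 X1 X3 zX1 zX3, c34, c12]; ring
  have hz1d : Z1 0 4 = X1 0 1 * X3 1 4 + X1 0 2 * X3 2 4 - X3 0 2 * X1 2 4 - X3 0 3 * X1 3 4 := by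
    rw [← h13, lie04 X1 X3 zX1 zX3, c34, c01]; ring
  -- low entries of Z2 vanish
  have zZ201 : Z2 0 1 = 0 := by rw [← h23]; exact lie01 X2 X3 zX2 zX3
  have zZ212 : Z2 1 2 = 0 := by rw [← h23]; exact lie12 X2 X3 zX2 zX3
  have zZ223 : Z2 2 3 = 0 := by rw [← h23]; exact lie23 X2 X3 zX2 zX3
  have zZ234 : Z2 3 4 = 0 := by rw [← h23]; exact lie34 X2 X3 zX2 zX3
  have zZ202 : Z2 0 2 = 0 := by rw [← h23, lie02 X2 X3 zX2 zX3, c12, c01]; ring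
  have zZ213 : Z2 1 3 = 0 := by rw [← h23, lie13 X2 X3 zX2 zX3, c23, c12]; ring
  have zZ224 : Z2 2 4 = 0 := by rw [← h23, lie24 X2 X3 zX2 zX3, c34, c23]; ring
  have hv1d : Z2 0 3 = X2 0 1 * X3 1 3 - X3 0 2 * X2 2 3 := by
    rw [← h23, lie03 X2 X3 zX2 zX3, c23, c01]; ring
  have hv2d : Z2 1 4 = X2 1 2 * X3 2 4 - X3 1 3 * X2 3 4 := by
    rw [← h23, lie14 X2 X3 zX2 zX3, c34, c12]; ring
  have hz2d : Z2 0 4 = X2 0 1 * X3 1 4 + X2 0 2 * X3 2 4 - X3 0 2 * X2 2 4 - X3 0 3 * X2 3 4 := by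
    rw [← h23, lie04 X2 X3 zX2 zX3, c34, c01]; ring
  -- extraction from h14
  have hsm : ∀ i j : Fin 5, (ε • Z2) i j = ε * Z2 i j := fun i j => rfl
  have hK1 : X1 0 1 * X4 1 2 = X1 1 2 * X4 0 1 := by
    have e := congrFun (congrFun h14 0) 2
    rw [lie02 X1 X4 zX1 zX4, hsm, zZ202] at e
    linear_combination e
  have hK2 : X1 1 2 * X4 2 3 = X1 2 3 * X4 1 2 := by
    have e := congrFun (congrFun h14 1) 3
    rw [lie13 X1 X4 zX1 zX4, hsm, zZ213] at e
    linear_combination e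
  have hK3 : X1 2 3 * X4 3 4 = X1 3 4 * X4 2 3 := by
    have e := congrFun (congrFun h14 2) 4
    rw [lie24 X1 X4 zX1 zX4, hsm, zZ224] at e
    linear_combination e
  have hR4aE : X1 0 1 * X4 1 3 + X1 0 2 * X4 2 3 - X4 0 1 * X1 1 3 - X4 0 2 * X1 2 3
      = ε * Z2 0 3 := by
    have e := congrFun (congrFun h14 0) 3
    rw [lie03 X1 X4 zX1 zX4, hsm] at e
    linear_combination e
  have hR4bE : X1 1 2 * X4 2 4 + X1 1 3 * X4 3 4 - X4 1 2 * X1 2 4 - X4 1 3 * X1 3 4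
      = ε * Z2 1 4 := by
    have e := congrFun (congrFun h14 1) 4
    rw [lie14 X1 X4 zX1 zX4, hsm] at e
    linear_combination e
  have hR8E : X1 0 1 * X4 1 4 + X1 0 2 * X4 2 4 + X1 0 3 * X4 3 4
      - X4 0 1 * X1 1 4 - X4 0 2 * X1 2 4 - X4 0 3 * X1 3 4 = ε * Z2 0 4 := by
    have e := congrFun (congrFun h14 0) 4
    rw [lie04 X1 X4 zX1 zX4, hsm] at e
    linear_combination e
  -- extraction from h24
  have hL1 : X2 0 1 * X4 1 2 = X2 1 2 * X4 0 1 := by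
    have e := congrFun (congrFun h24 0) 2
    rw [lie02 X2 X4 zX2 zX4, zZ102] at e
    linear_combination e
  have hL2 : X2 1 2 * X4 2 3 = X2 2 3 * X4 1 2 := by
    have e := congrFun (congrFun h24 1) 3
    rw [lie13 X2 X4 zX2 zX4, zZ113] at e
    linear_combination e
  have hL3 : X2 2 3 * X4 3 4 = X2 3 4 * X4 2 3 := by
    have e := congrFun (congrFun h24 2) 4
    rw [lie24 X2 X4 zX2 zX4, zZ124] at e
    linear_combination e
  have hR5aE : X2 0 1 * X4 1 3 + X2 0 2 * X4 2 3 - X4 0 1 * X2 1 3 - X4 0 2 * X2 2 3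
      = Z1 0 3 := by
    have e := congrFun (congrFun h24 0) 3
    rw [lie03 X2 X4 zX2 zX4] at e
    linear_combination e
  have hR5bE : X2 1 2 * X4 2 4 + X2 1 3 * X4 3 4 - X4 1 2 * X2 2 4 - X4 1 3 * X2 3 4
      = Z1 1 4 := by
    have e := congrFun (congrFun h24 1) 4
    rw [lie14 X2 X4 zX2 zX4] at e
    linear_combination e
  have hR9E : X2 0 1 * X4 1 4 + X2 0 2 * X4 2 4 + X2 0 3 * X4 3 4
      - X4 0 1 * X2 1 4 - X4 0 2 * X2 2 4 - X4 0 3 * X2 3 4 = Z1 0 4 := by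
    have e := congrFun (congrFun h24 0) 4
    rw [lie04 X2 X4 zX2 zX4] at e
    linear_combination e
  -- extraction from h34
  have hM1E : X3 0 2 * X4 2 3 - X4 0 1 * X3 1 3 = 0 := by
    have e := congrFun (congrFun h34 0) 3
    rw [lie03 X3 X4 zX3 zX4, Matrix.zero_apply, c01, c23] at e
    linear_combination e
  have hM2E : X3 1 3 * X4 3 4 - X4 1 2 * X3 2 4 = 0 := by
    have e := congrFun (congrFun h34 1) 4
    rw [lie14 X3 X4 zX3 zX4, Matrix.zero_apply, c12, c34] at e
    linear_combination e
  have hR6E : X3 0 2 * X4 2 4 + X3 0 3 * X4 3 4 - X4 0 1 * X3 1 4 - X4 0 2 * X3 2 4 = 0 := by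
    have e := congrFun (congrFun h34 0) 4
    rw [lie04 X3 X4 zX3 zX4, Matrix.zero_apply, c01, c34] at e
    linear_combination e
  -- the six "R7" relations
  have hR7a : X1 0 1 * Z1 1 4 = Z1 0 3 * X1 3 4 := by
    have e := congrFun (congrFun h1Z1 0) 4
    rw [lie04 X1 Z1 zX1 zZ1, Matrix.zero_apply, zZ101, zZ102, zZ124, zZ134] at e
    linear_combination e
  have hR7b : X1 0 1 * Z2 1 4 = Z2 0 3 * X1 3 4 := by
    have e := congrFun (congrFun h1Z2 0) 4
    rw [lie04 X1 Z2 zX1 zZ2, Matrix.zero_apply, zZ201, zZ202, zZ224, zZ234] at e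
    linear_combination e
  have hR7c : X2 0 1 * Z1 1 4 = Z1 0 3 * X2 3 4 := by
    have e := congrFun (congrFun h2Z1 0) 4
    rw [lie04 X2 Z1 zX2 zZ1, Matrix.zero_apply, zZ101, zZ102, zZ124, zZ134] at e
    linear_combination e
  have hR7d : X2 0 1 * Z2 1 4 = Z2 0 3 * X2 3 4 := by
    have e := congrFun (congrFun h2Z2 0) 4
    rw [lie04 X2 Z2 zX2 zZ2, Matrix.zero_apply, zZ201, zZ202, zZ224, zZ234] at e
    linear_combination e
  have hR7e : X4 0 1 * Z1 1 4 = Z1 0 3 * X4 3 4 := by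
    have e := congrFun (congrFun hZ14 0) 4
    rw [lie04 Z1 X4 zZ1 zX4, Matrix.zero_apply, zZ101, zZ102, zZ124, zZ134] at e
    linear_combination -e
  have hR7f : X4 0 1 * Z2 1 4 = Z2 0 3 * X4 3 4 := by
    have e := congrFun (congrFun hZ24 0) 4
    rw [lie04 Z2 X4 zZ2 zX4, Matrix.zero_apply, zZ201, zZ202, zZ224, zZ234] at e
    linear_combination -e
  -- linear independence of Z1, Z2 in coordinates
  have hpair : LinearIndependent k ![Z1, Z2] := by
    have hcomp := hli6.comp (![4, 5] : Fin 2 → Fin 6) (by decide)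
    have heq : (![X1, X2, X3, X4, Z1, Z2] ∘ (![4, 5] : Fin 2 → Fin 6)) = ![Z1, Z2] := by
      funext i; fin_cases i <;> rfl
    rwa [heq] at hcomp
  have hIND3 : ∀ l m : k, l * Z1 0 3 + m * Z2 0 3 = 0 → l * Z1 1 4 + m * Z2 1 4 = 0 →
      l * Z1 0 4 + m * Z2 0 4 = 0 → l = 0 ∧ m = 0 := by
    intro l m h1 h2 h3
    have hz : l • Z1 + m • Z2 = 0 := by
      ext i j
      by_cases hij : (j : ℕ) ≤ (i : ℕ)
      · have hij' : j ≤ i := hij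
        simp [Matrix.add_apply, Matrix.smul_apply, zZ1 i j hij', zZ2 i j hij']
      · fin_cases i <;> fin_cases j <;>
          first
            | exact absurd (by decide) hij
            | (simp only [Matrix.add_apply, Matrix.smul_apply, smul_eq_mul, Matrix.zero_apply]
               first
                 | exact show l * Z1 0 3 + m * Z2 0 3 = 0 from h1
                 | exact show l * Z1 1 4 + m * Z2 1 4 = 0 from h2
                 | exact show l * Z1 0 4 + m * Z2 0 4 = 0 from h3
                 | exact show l * Z1 0 1 + m * Z2 0 1 = 0 by rw [zZ101, zZ201]; ring
                 | exact show l * Z1 1 2 + m * Z2 1 2 = 0 by rw [zZ112, zZ212]; ring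
                 | exact show l * Z1 2 3 + m * Z2 2 3 = 0 by rw [zZ123, zZ223]; ring
                 | exact show l * Z1 3 4 + m * Z2 3 4 = 0 by rw [zZ134, zZ234]; ring
                 | exact show l * Z1 0 2 + m * Z2 0 2 = 0 by rw [zZ102, zZ202]; ring
                 | exact show l * Z1 1 3 + m * Z2 1 3 = 0 by rw [zZ113, zZ213]; ring
                 | exact show l * Z1 2 4 + m * Z2 2 4 = 0 by rw [zZ124, zZ224]; ring)
    have h := Fintype.linearIndependent_iff.mp hpair ![l, m] (by
      simpa [Fin.sum_univ_two] using hz)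
    exact ⟨h 0, h 1⟩
  -- u and v are parallel
  have huv : Z1 0 3 * Z2 1 4 = Z1 1 4 * Z2 0 3 := by
    by_contra hpar
    have hD : Z1 0 3 * Z2 1 4 - Z1 1 4 * Z2 0 3 ≠ 0 := sub_ne_zero_of_ne hpar
    have hx1 : X1 0 1 = 0 := by
      have h : X1 0 1 * (Z1 0 3 * Z2 1 4 - Z1 1 4 * Z2 0 3) = 0 := by
        linear_combination (Z1 0 3) * hR7b - (Z2 0 3) * hR7a
      exact (mul_eq_zero.mp h).resolve_right hD
    have hx4 : X1 3 4 * (Z1 0 3 * Z2 1 4 - Z1 1 4 * Z2 0 3) = 0 := by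
      linear_combination (Z1 1 4) * hR7b - (Z2 1 4) * hR7a
    have hx4' : X1 3 4 = 0 := (mul_eq_zero.mp hx4).resolve_right hD
    have hy1 : X2 0 1 = 0 := by
      have h : X2 0 1 * (Z1 0 3 * Z2 1 4 - Z1 1 4 * Z2 0 3) = 0 := by
        linear_combination (Z1 0 3) * hR7d - (Z2 0 3) * hR7c
      exact (mul_eq_zero.mp h).resolve_right hD
    have hy4 : X2 3 4 = 0 := by
      have h : X2 3 4 * (Z1 0 3 * Z2 1 4 - Z1 1 4 * Z2 0 3) = 0 := by
        linear_combination (Z1 1 4) * hR7d - (Z2 1 4) * hR7c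
      exact (mul_eq_zero.mp h).resolve_right hD
    have hp0 : X3 0 2 = 0 := by
      linear_combination hpd + (X2 1 2) * hx1 - (X1 1 2) * hy1
    have hr0 : X3 2 4 = 0 := by
      linear_combination hrd + (X1 2 3) * hy4 - (X2 2 3) * hx4'
    have hu10 : Z1 0 3 = 0 := by
      linear_combination hu1d + (X3 1 3) * hx1 - (X1 2 3) * hp0
    have hu20 : Z1 1 4 = 0 := by
      linear_combination hu2d + (X1 1 2) * hr0 - (X3 1 3) * hx4'
    exact hpar (by rw [hu10, hu20]; ring)
  -- main case split
  by_cases hc2 : Z1 1 4 = 0 ∧ Z2 1 4 = 0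
  · by_cases hc1 : Z1 0 3 = 0 ∧ Z2 0 3 = 0
    · -- impossible: Z1, Z2 would be dependent
      exfalso
      obtain ⟨hz2', hz1'⟩ := hIND3 (Z2 0 4) (-(Z1 0 4))
        (by rw [hc1.1, hc1.2]; ring) (by rw [hc2.1, hc2.2]; ring) (by ring)
      have h10 := hIND3 1 0 (by rw [hc1.1]; ring) (by rw [hc2.1]; ring)
        (by rw [neg_eq_zero.mp hz1']; ring)
      exact one_ne_zero h10.1
    · -- Case A : u2 = v2 = 0, (u1, v1) ≠ 0
      obtain ⟨hu20, hv20⟩ := hc2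
      have hx40 : X1 3 4 = 0 := by
        rcases not_and_or.mp hc1 with h | h
        · have e : Z1 0 3 * X1 3 4 = 0 := by
            linear_combination (X1 0 1) * hu20 - hR7a
          exact (mul_eq_zero.mp e).resolve_left h
        · have e : Z2 0 3 * X1 3 4 = 0 := by
            linear_combination (X1 0 1) * hv20 - hR7b
          exact (mul_eq_zero.mp e).resolve_left h
      have hy40 : X2 3 4 = 0 := by
        rcases not_and_or.mp hc1 with h | h
        · have e : Z1 0 3 * X2 3 4 = 0 := by
            linear_combination (X2 0 1) * hu20 - hR7c
          exact (mul_eq_zero.mp e).resolve_left h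
        · have e : Z2 0 3 * X2 3 4 = 0 := by
            linear_combination (X2 0 1) * hv20 - hR7d
          exact (mul_eq_zero.mp e).resolve_left h
      have hd40 : X4 3 4 = 0 := by
        rcases not_and_or.mp hc1 with h | h
        · have e : Z1 0 3 * X4 3 4 = 0 := by
            linear_combination (X4 0 1) * hu20 - hR7e
          exact (mul_eq_zero.mp e).resolve_left h
        · have e : Z2 0 3 * X4 3 4 = 0 := by
            linear_combination (X4 0 1) * hv20 - hR7f
          exact (mul_eq_zero.mp e).resolve_left h
      have hr0 : X3 2 4 = 0 := by
        linear_combination hrd + (X1 2 3) * hy40 - (X2 2 3) * hx40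
      exact lemA ε (X1 0 1) (X1 1 2) (X1 2 3) (X2 0 1) (X2 1 2) (X2 2 3)
        (X4 0 1) (X4 1 2) (X4 2 3) (X4 0 2) (X4 1 3) (X4 2 4)
        (X1 0 2) (X1 1 3) (X1 2 4) (X2 0 2) (X2 1 3) (X2 2 4)
        (X4 1 4) (X1 1 4) (X2 1 4) (X3 0 2) (X3 1 3) (Z1 0 3) (Z2 0 3) (Z1 0 4) (Z2 0 4)
        (X3 1 4)
        (by linear_combination hpd) (by linear_combination hqd)
        (by linear_combination hm2d + (X1 1 3) * hy40 - (X2 1 3) * hx40)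
        (by linear_combination hu1d) (by linear_combination hv1d)
        (by linear_combination hz1d + (X1 0 2) * hr0 - (X3 0 3) * hx40)
        (by linear_combination hz2d + (X2 0 2) * hr0 - (X3 0 3) * hy40)
        hK1 hK2 hL1 hL2 (by linear_combination -hM1E)
        (by linear_combination hR4aE)
        (by linear_combination hR4bE - (X1 1 3) * hd40 + (X4 1 3) * hx40 + ε * hv20)
        (by linear_combination hR5aE)
        (by linear_combination hR5bE - (X2 1 3) * hd40 + (X4 1 3) * hy40 + hu20)
        (by linear_combination hR8E - (X1 0 3) * hd40 + (X4 0 3) * hx40)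
        (by linear_combination hR9E - (X2 0 3) * hd40 + (X4 0 3) * hy40)
        hc1
        (fun l m hA hB => hIND3 l m hA (by rw [hu20, hv20]; ring) hB)
  · by_cases hc1 : Z1 0 3 = 0 ∧ Z2 0 3 = 0
    · -- Case B : u1 = v1 = 0, (u2, v2) ≠ 0 (mirror image of Case A)
      obtain ⟨hu10, hv10⟩ := hc1
      have hx10 : X1 0 1 = 0 := by
        rcases not_and_or.mp hc2 with h | h
        · have e : X1 0 1 * Z1 1 4 = 0 := by
            linear_combination hR7a + (X1 3 4) * hu10
          exact (mul_eq_zero.mp e).resolve_right h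
        · have e : X1 0 1 * Z2 1 4 = 0 := by
            linear_combination hR7b + (X1 3 4) * hv10
          exact (mul_eq_zero.mp e).resolve_right h
      have hy10 : X2 0 1 = 0 := by
        rcases not_and_or.mp hc2 with h | h
        · have e : X2 0 1 * Z1 1 4 = 0 := by
            linear_combination hR7c + (X2 3 4) * hu10
          exact (mul_eq_zero.mp e).resolve_right h
        · have e : X2 0 1 * Z2 1 4 = 0 := by
            linear_combination hR7d + (X2 3 4) * hv10
          exact (mul_eq_zero.mp e).resolve_right h
      have hd10 : X4 0 1 = 0 := by
        rcases not_and_or.mp hc2 with h | h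
        · have e : X4 0 1 * Z1 1 4 = 0 := by
            linear_combination hR7e + (X4 3 4) * hu10
          exact (mul_eq_zero.mp e).resolve_right h
        · have e : X4 0 1 * Z2 1 4 = 0 := by
            linear_combination hR7f + (X4 3 4) * hv10
          exact (mul_eq_zero.mp e).resolve_right h
      have hp0 : X3 0 2 = 0 := by
        linear_combination hpd + (X2 1 2) * hx10 - (X1 1 2) * hy10
      exact lemA ε (-X1 3 4) (-X1 2 3) (-X1 1 2) (-X2 3 4) (-X2 2 3) (-X2 1 2)
        (-X4 3 4) (-X4 2 3) (-X4 1 2) (-X4 2 4) (-X4 1 3) (-X4 0 2)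
        (-X1 2 4) (-X1 1 3) (-X1 0 2) (-X2 2 4) (-X2 1 3) (-X2 0 2)
        (-X4 0 3) (-X1 0 3) (-X2 0 3) (-X3 2 4) (-X3 1 3) (-Z1 1 4) (-Z2 1 4)
        (-Z1 0 4) (-Z2 0 4) (-X3 0 3)
        (by linear_combination -hrd) (by linear_combination -hqd)
        (by linear_combination -hm1d - (X2 1 3) * hx10 + (X1 1 3) * hy10)
        (by linear_combination -hu2d) (by linear_combination -hv2d)
        (by linear_combination -hz1d - (X3 1 4) * hx10 + (X1 2 4) * hp0)
        (by linear_combination -hz2d - (X3 1 4) * hy10 + (X2 2 4) * hp0)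
        (by linear_combination -hK3) (by linear_combination -hK2)
        (by linear_combination -hL3) (by linear_combination -hL2)
        (by linear_combination hM2E)
        (by linear_combination -hR4bE)
        (by linear_combination -hR4aE + (X4 1 3) * hx10 - (X1 1 3) * hd10 - ε * hv10)
        (by linear_combination -hR5bE)
        (by linear_combination -hR5aE + (X4 1 3) * hy10 - (X2 1 3) * hd10 - hu10)
        (by linear_combination -hR8E + (X4 1 4) * hx10 - (X1 1 4) * hd10)
        (by linear_combination -hR9E + (X4 1 4) * hy10 - (X2 1 4) * hd10)
        (fun h => hc2 ⟨neg_eq_zero.mp h.1, neg_eq_zero.mp h.2⟩)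
        (fun l m hA hB => hIND3 l m (by rw [hu10, hv10]; ring)
          (by linear_combination -hA) (by linear_combination -hB))
    · -- Case C : both components present
      by_cases hu0 : Z1 0 3 = 0 ∧ Z1 1 4 = 0
      · -- u = 0, so v has both components nonzero; use n = v
        have hv1ne : Z2 0 3 ≠ 0 := fun h => hc1 ⟨hu0.1, h⟩
        have hv2ne : Z2 1 4 ≠ 0 := fun h => hc2 ⟨hu0.2, h⟩
        have hsn1 : X1 0 1 / Z2 0 3 * Z2 0 3 = X1 0 1 := div_mul_cancel₀ _ hv1ne
        have htn1 : X2 0 1 / Z2 0 3 * Z2 0 3 = X2 0 1 := div_mul_cancel₀ _ hv1ne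
        have hwn1 : X4 0 1 / Z2 0 3 * Z2 0 3 = X4 0 1 := div_mul_cancel₀ _ hv1ne
        have hsn2 : X1 0 1 / Z2 0 3 * Z2 1 4 = X1 3 4 := by
          field_simp
          linear_combination hR7b
        have htn2 : X2 0 1 / Z2 0 3 * Z2 1 4 = X2 3 4 := by
          field_simp
          linear_combination hR7d
        have hwn2 : X4 0 1 / Z2 0 3 * Z2 1 4 = X4 3 4 := by
          field_simp
          linear_combination hR7f
        exact lemC ε (Z2 0 3) (Z2 1 4) (X1 0 1 / Z2 0 3) (X2 0 1 / Z2 0 3) (X4 0 1 / Z2 0 3)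
          (X1 1 2) (X1 2 3) (X2 1 2) (X2 2 3) (X4 1 2) (X4 2 3)
          (X4 0 2) (X4 1 3) (X4 2 4) (X1 0 2) (X1 1 3) (X1 2 4) (X2 0 2) (X2 1 3) (X2 2 4)
          0 1 (X3 0 2) (X3 1 3) (X3 2 4) hv1ne hv2ne
          (by rw [hsn1, htn1]; linear_combination hpd)
          (by linear_combination hqd)
          (by rw [htn2, hsn2]; linear_combination hrd)
          (by rw [hsn1]; linear_combination hu1d - hu0.1)
          (by rw [hsn2]; linear_combination hu2d - hu0.2)
          (by rw [htn1]; linear_combination hv1d)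
          (by rw [htn2]; linear_combination hv2d)
          (by rw [hsn1, hwn1]; exact hK1) hK2 (by rw [hwn2, hsn2]; exact hK3)
          (by rw [htn1, hwn1]; exact hL1) hL2 (by rw [hwn2, htn2]; exact hL3)
          (by rw [hsn1, hwn1]; linear_combination hR4aE)
          (by rw [hsn2, hwn2]; linear_combination hR4bE)
          (by rw [htn1, hwn1]; linear_combination hR5aE + hu0.1)
          (by rw [htn2, hwn2]; linear_combination hR5bE + hu0.2)
          (by intro h; exact one_ne_zero h.2)
      · -- u ≠ 0 : both components of u are nonzero; use n = u
        have hu1ne : Z1 0 3 ≠ 0 := by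
          intro h
          rcases not_and_or.mp hu0 with h' | h'
          · exact h' h
          · have e : Z1 1 4 * Z2 0 3 = 0 := by linear_combination -huv + (Z2 1 4) * h
            rcases mul_eq_zero.mp e with h2 | h2
            · exact h' h2
            · exact hc1 ⟨h, h2⟩
        have hu2ne : Z1 1 4 ≠ 0 := by
          intro h
          have e : Z1 0 3 * Z2 1 4 = 0 := by linear_combination huv + (Z2 0 3) * h
          rcases mul_eq_zero.mp e with h2 | h2
          · exact hu0 ⟨h2, h⟩
          · exact hc2 ⟨h, h2⟩
        have hsn1 : X1 0 1 / Z1 0 3 * Z1 0 3 = X1 0 1 := div_mul_cancel₀ _ hu1ne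
        have htn1 : X2 0 1 / Z1 0 3 * Z1 0 3 = X2 0 1 := div_mul_cancel₀ _ hu1ne
        have hwn1 : X4 0 1 / Z1 0 3 * Z1 0 3 = X4 0 1 := div_mul_cancel₀ _ hu1ne
        have hvn1 : Z2 0 3 / Z1 0 3 * Z1 0 3 = Z2 0 3 := div_mul_cancel₀ _ hu1ne
        have hsn2 : X1 0 1 / Z1 0 3 * Z1 1 4 = X1 3 4 := by
          field_simp
          linear_combination hR7a
        have htn2 : X2 0 1 / Z1 0 3 * Z1 1 4 = X2 3 4 := by
          field_simp
          linear_combination hR7c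
        have hwn2 : X4 0 1 / Z1 0 3 * Z1 1 4 = X4 3 4 := by
          field_simp
          linear_combination hR7e
        have hvn2 : Z2 0 3 / Z1 0 3 * Z1 1 4 = Z2 1 4 := by
          field_simp
          linear_combination -huv
        exact lemC ε (Z1 0 3) (Z1 1 4) (X1 0 1 / Z1 0 3) (X2 0 1 / Z1 0 3) (X4 0 1 / Z1 0 3)
          (X1 1 2) (X1 2 3) (X2 1 2) (X2 2 3) (X4 1 2) (X4 2 3)
          (X4 0 2) (X4 1 3) (X4 2 4) (X1 0 2) (X1 1 3) (X1 2 4) (X2 0 2) (X2 1 3) (X2 2 4)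
          1 (Z2 0 3 / Z1 0 3) (X3 0 2) (X3 1 3) (X3 2 4) hu1ne hu2ne
          (by rw [hsn1, htn1]; linear_combination hpd)
          (by linear_combination hqd)
          (by rw [htn2, hsn2]; linear_combination hrd)
          (by rw [hsn1]; linear_combination hu1d)
          (by rw [hsn2]; linear_combination hu2d)
          (by rw [hvn1, htn1]; linear_combination hv1d)
          (by rw [hvn2, htn2]; linear_combination hv2d)
          (by rw [hsn1, hwn1]; exact hK1) hK2 (by rw [hwn2, hsn2]; exact hK3)
          (by rw [htn1, hwn1]; exact hL1) hL2 (by rw [hwn2, htn2]; exact hL3)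
          (by rw [hsn1, hwn1, hvn1]; linear_combination hR4aE)
          (by rw [hsn2, hwn2, hvn2]; linear_combination hR4bE)
          (by rw [htn1, hwn1]; linear_combination hR5aE)
          (by rw [htn2, hwn2]; linear_combination hR5bE)
          (by intro h; exact one_ne_zero h.1)
end
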